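/- arXiv:2407.03659 — 6 statements merged into one kernel-verified Lean document; each statement's English description precedes it below -/
import Mathlib

section
/- Let ρ₁ > −1 and ρ₂ > 0 be real constants. For every absolutely continuous function f on [0,1] with f(0) = 0 and ∫₀¹ (f′(x))² dx ≤ 1, the quantity ρ₂⁻¹ ∫₀¹ x^{(1+ρ₁−ρ₂)/ρ₂} f(x) dx is at most √2 · ((1+ρ₁+ρ₂)(2+2ρ₁+ρ₂))^{−1/2}, and this bound is attained by the function f with f(0)=0 and f′(t) = (1 − t^{(1+ρ₁)/ρ₂}) / (∫₀¹ (1 − x^{(1+ρ₁)/ρ₂})² dx)^{1/2}. -/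
open MeasureTheory Filter Real intervalIntegral

lemma sq_one_sub_rpow_integral {b : ℝ} (hb : 0 < b) :
    (∫ y in (0:ℝ)..1, (1 - y ^ b) ^ 2) = 2 * b ^ 2 / ((b + 1) * (2 * b + 1)) := by
  have h1 : -1 < b := by linarith
  have h2 : -1 < 2 * b := by linarith
  have hib : IntervalIntegrable (fun y : ℝ => y ^ b) volume 0 1 := intervalIntegrable_rpow' h1
  have hib2 : IntervalIntegrable (fun y : ℝ => y ^ (2 * b)) volume 0 1 := intervalIntegrable_rpow' h2
  have hcongr : ∀ y ∈ Set.uIcc (0:ℝ) 1,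
      (1 - y ^ b) ^ 2 = 1 - 2 * y ^ b + y ^ (2 * b) := by
    intro y hy
    rw [Set.uIcc_of_le (by norm_num : (0:ℝ) ≤ 1)] at hy
    have hy0 : (0:ℝ) ≤ y := hy.1
    have : y ^ (2 * b) = (y ^ b) ^ 2 := by
      rw [← Real.rpow_natCast (y ^ b) 2, ← Real.rpow_mul hy0]
      norm_num; ring_nf
    rw [this]; ring
  rw [intervalIntegral.integral_congr hcongr]
  have e1 : (∫ y in (0:ℝ)..1, y ^ b) = 1 / (b + 1) := by
    rw [integral_rpow (Or.inl h1)]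
    rw [Real.one_rpow, Real.zero_rpow (by linarith)]; norm_num
  have e2 : (∫ y in (0:ℝ)..1, y ^ (2 * b)) = 1 / (2 * b + 1) := by
    rw [integral_rpow (Or.inl h2)]
    rw [Real.one_rpow, Real.zero_rpow (by linarith)]; norm_num
  rw [intervalIntegral.integral_add (by
      exact (intervalIntegrable_const.sub (hib.const_mul 2))) hib2,
    intervalIntegral.integral_sub intervalIntegrable_const (hib.const_mul 2),
    intervalIntegral.integral_const_mul, e1, e2]
  simp only [intervalIntegral.integral_const, smul_eq_mul, mul_one, sub_zero]
  have hb1 : b + 1 ≠ 0 := by linarith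
  have hb2 : 2 * b + 1 ≠ 0 := by linarith
  field_simp
  ring

lemma const_eval {ρ₁ ρ₂ : ℝ} (h1 : -1 < ρ₁) (h2 : 0 < ρ₂) :
    ρ₂⁻¹ * Real.sqrt (2 / (((1 + ρ₁) / ρ₂ + 1) * (2 * ((1 + ρ₁) / ρ₂) + 1)))
      = Real.sqrt 2 / Real.sqrt ((1 + ρ₁ + ρ₂) * (2 + 2 * ρ₁ + ρ₂)) := by
  have hρ : ρ₂ ≠ 0 := ne_of_gt h2
  have hP : (0:ℝ) < (1 + ρ₁ + ρ₂) * (2 + 2 * ρ₁ + ρ₂) := by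
    apply mul_pos <;> linarith
  have hD : ((1 + ρ₁) / ρ₂ + 1) * (2 * ((1 + ρ₁) / ρ₂) + 1)
      = ((1 + ρ₁ + ρ₂) * (2 + 2 * ρ₁ + ρ₂)) / ρ₂ ^ 2 := by
    field_simp
  rw [hD]
  rw [div_div_eq_mul_div, Real.sqrt_div' _ (by positivity)]
  rw [show (2 * ρ₂ ^ 2 : ℝ) = (Real.sqrt 2 * ρ₂) ^ 2 by
    rw [mul_pow, Real.sq_sqrt (by norm_num)]]
  rw [Real.sqrt_sq (by positivity)]
  field_simp

lemma fubini_step {a : ℝ} (ha : -1 < a) {g : ℝ → ℝ}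
    (hg : IntervalIntegrable g volume 0 1) :
    (∫ x in (0:ℝ)..1, x ^ a * ∫ t in (0:ℝ)..x, g t)
      = ∫ t in Set.Ioc (0:ℝ) 1, ((1 - t ^ (a + 1)) / (a + 1)) * g t := by
  set μ : Measure ℝ := volume.restrict (Set.Ioc (0:ℝ) 1) with hμ
  have hprob : IsProbabilityMeasure μ := ⟨by simp [hμ]⟩
  have hgI : IntegrableOn g (Set.Ioc (0:ℝ) 1) volume :=
    (intervalIntegrable_iff_integrableOn_Ioc_of_le (by norm_num)).mp hg
  have haI : IntegrableOn (fun x : ℝ => x ^ a) (Set.Ioc (0:ℝ) 1) volume :=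
    (intervalIntegrable_iff_integrableOn_Ioc_of_le (by norm_num)).mp
      (intervalIntegrable_rpow' ha)
  set S : Set (ℝ × ℝ) := {p : ℝ × ℝ | p.2 ≤ p.1} with hS
  have hSm : MeasurableSet S := measurableSet_le measurable_snd measurable_fst
  set F : ℝ × ℝ → ℝ := S.indicator (fun p => p.1 ^ a * g p.2) with hF
  have hgsm : AEStronglyMeasurable g μ := hgI.aestronglyMeasurable
  have hFsm : AEStronglyMeasurable F (μ.prod μ) := by
    apply AEStronglyMeasurable.indicator _ hSm
    refine AEStronglyMeasurable.mul ?_ ?_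
    · exact (by fun_prop : Measurable (fun p : ℝ × ℝ => p.1 ^ a)).aestronglyMeasurable
    · exact hgsm.comp_quasiMeasurePreserving Measure.quasiMeasurePreserving_snd
  -- integrability of F on the product
  have hbound : Integrable (fun p : ℝ × ℝ => p.1 ^ a * |g p.2|) (μ.prod μ) :=
    Integrable.mul_prod haI hgI.abs
  have haemem : ∀ᵐ p ∂(μ.prod μ), p ∈ (Set.Ioc (0:ℝ) 1) ×ˢ (Set.Ioc (0:ℝ) 1) := by
    rw [hμ, Measure.prod_restrict]
    exact ae_restrict_mem (measurableSet_Ioc.prod measurableSet_Ioc)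
  have hFint : Integrable F (μ.prod μ) := by
    refine hbound.mono hFsm ?_
    filter_upwards [haemem] with p hp
    have hx : (0:ℝ) < p.1 := hp.1.1
    have hxa : (0:ℝ) ≤ p.1 ^ a := (Real.rpow_pos_of_pos hx a).le
    rw [hF, Set.indicator_apply]
    split_ifs with h
    · simp only [Real.norm_eq_abs, abs_mul, abs_abs]
      rw [abs_of_nonneg hxa]
    · simp only [norm_zero, Real.norm_eq_abs]
      positivity
  -- identify the LHS
  have hLHS : (∫ x in (0:ℝ)..1, x ^ a * ∫ t in (0:ℝ)..x, g t)
      = ∫ x, (∫ t, F (x, t) ∂μ) ∂μ := by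
    rw [intervalIntegral.integral_of_le (by norm_num : (0:ℝ) ≤ 1)]
    refine setIntegral_congr_fun measurableSet_Ioc fun x hx => ?_
    have hfun : (fun t => F (x, t)) = (Set.Iic x).indicator (fun t => x ^ a * g t) := by
      funext t
      simp [hF, hS, Set.indicator_apply, Set.mem_Iic]
    rw [hfun, MeasureTheory.integral_indicator measurableSet_Iic, hμ,
      Measure.restrict_restrict measurableSet_Iic]
    have hset : Set.Iic x ∩ Set.Ioc (0:ℝ) 1 = Set.Ioc 0 x := by
      ext t
      simp only [Set.mem_inter_iff, Set.mem_Iic, Set.mem_Ioc]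
      exact ⟨fun h => ⟨h.2.1, h.1⟩, fun h => ⟨h.2, h.1, h.2.trans hx.2⟩⟩
    rw [hset, MeasureTheory.integral_const_mul,
      ← intervalIntegral.integral_of_le hx.1.le]
  -- identify the RHS after swapping
  have hRHS : (∫ t, (∫ x, F (x, t) ∂μ) ∂μ)
      = ∫ t in Set.Ioc (0:ℝ) 1, ((1 - t ^ (a + 1)) / (a + 1)) * g t := by
    refine setIntegral_congr_fun measurableSet_Ioc fun t ht => ?_
    have hfun : (fun x => F (x, t)) = (Set.Ici t).indicator (fun x => x ^ a * g t) := by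
      funext x
      simp [hF, hS, Set.indicator_apply, Set.mem_Ici]
    rw [hfun, MeasureTheory.integral_indicator measurableSet_Ici, hμ,
      Measure.restrict_restrict measurableSet_Ici]
    have hset : Set.Ici t ∩ Set.Ioc (0:ℝ) 1 = Set.Icc t 1 := by
      ext x
      simp only [Set.mem_inter_iff, Set.mem_Ici, Set.mem_Ioc, Set.mem_Icc]
      exact ⟨fun h => ⟨h.1, h.2.2⟩, fun h => ⟨h.1, ht.1.trans_le h.1, h.2⟩⟩
    rw [hset, MeasureTheory.integral_mul_const, MeasureTheory.integral_Icc_eq_integral_Ioc,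
      ← intervalIntegral.integral_of_le ht.2]
    rw [integral_rpow (Or.inl ha), Real.one_rpow]
  rw [hLHS, MeasureTheory.integral_integral_swap (f := fun x t => F (x, t)) hFint, hRHS]

/-- Strassen-class bound: for every absolutely continuous `f` on `[0,1]` with
`f 0 = 0` (written as `f x = ∫ t in 0..x, g t` for the derivative `g`) and
`∫₀¹ g² ≤ 1`, the functional `ρ₂⁻¹ ∫₀¹ x^{(1+ρ₁-ρ₂)/ρ₂} f(x) dx` is at most
`√2 ((1+ρ₁+ρ₂)(2+2ρ₁+ρ₂))^{-1/2}`, and the bound is attained at the stated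
extremal function. -/
theorem stmt2 (ρ₁ ρ₂ : ℝ) (h1 : -1 < ρ₁) (h2 : 0 < ρ₂) :
    (∀ g : ℝ → ℝ, IntervalIntegrable g volume 0 1 →
      IntervalIntegrable (fun t => (g t) ^ 2) volume 0 1 →
      (∫ t in (0:ℝ)..1, (g t) ^ 2) ≤ 1 →
      ρ₂⁻¹ * ∫ x in (0:ℝ)..1, x ^ ((1 + ρ₁ - ρ₂) / ρ₂) * (∫ t in (0:ℝ)..x, g t)
        ≤ Real.sqrt 2 / Real.sqrt ((1 + ρ₁ + ρ₂) * (2 + 2 * ρ₁ + ρ₂))) ∧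
    (ρ₂⁻¹ * ∫ x in (0:ℝ)..1, x ^ ((1 + ρ₁ - ρ₂) / ρ₂) *
        (∫ t in (0:ℝ)..x, (1 - t ^ ((1 + ρ₁) / ρ₂)) /
          Real.sqrt (∫ y in (0:ℝ)..1, (1 - y ^ ((1 + ρ₁) / ρ₂)) ^ 2))
      = Real.sqrt 2 / Real.sqrt ((1 + ρ₁ + ρ₂) * (2 + 2 * ρ₁ + ρ₂))) := by
  constructor
  · intro g hg hg2 hgle
    set β : ℝ := (1 + ρ₁) / ρ₂ with hβdef
    set α : ℝ := (1 + ρ₁ - ρ₂) / ρ₂ with hαdef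
    have hρ : ρ₂ ≠ 0 := ne_of_gt h2
    have hβ : 0 < β := div_pos (by linarith) h2
    have hαβ : α + 1 = β := by rw [hαdef, hβdef]; field_simp; ring
    have hα : -1 < α := by linarith
    have hD : (0:ℝ) < (β + 1) * (2 * β + 1) := by positivity
    set μ : Measure ℝ := volume.restrict (Set.Ioc (0:ℝ) 1) with hμ
    have hprob : IsProbabilityMeasure μ := ⟨by simp [hμ]⟩
    set φ : ℝ → ℝ := fun t => (1 - t ^ β) / β with hφdef
    have hstep : (∫ x in (0:ℝ)..1, x ^ α * ∫ t in (0:ℝ)..x, g t)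
        = ∫ t, φ t * g t ∂μ := by
      rw [fubini_step hα hg, hαβ, hμ]
    have hgsm : AEStronglyMeasurable g μ :=
      ((intervalIntegrable_iff_integrableOn_Ioc_of_le (by norm_num)).mp hg).aestronglyMeasurable
    have hφsm : AEStronglyMeasurable φ μ :=
      (by fun_prop : Measurable φ).aestronglyMeasurable
    have h2e : ENNReal.ofReal (2:ℝ) = 2 := by norm_num
    have hφ2 : MemLp φ (ENNReal.ofReal (2:ℝ)) μ := by
      rw [h2e]
      refine MemLp.of_bound hφsm (1 / β) ?_
      filter_upwards [ae_restrict_mem measurableSet_Ioc] with t ht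
      have h0 : (0:ℝ) ≤ t ^ β := Real.rpow_nonneg ht.1.le β
      have h1' : t ^ β ≤ 1 := Real.rpow_le_one ht.1.le ht.2 hβ.le
      have hnn : (0:ℝ) ≤ (1 - t ^ β) / β := div_nonneg (by linarith) hβ.le
      have : ‖φ t‖ = (1 - t ^ β) / β := by
        show ‖(1 - t ^ β) / β‖ = _
        rw [Real.norm_eq_abs, abs_of_nonneg hnn]
      rw [this]
      exact (div_le_div_iff_of_pos_right hβ).mpr (by linarith)
    have hg2I : Integrable (fun t => g t ^ 2) μ :=
      (intervalIntegrable_iff_integrableOn_Ioc_of_le (by norm_num)).mp hg2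
    have hgL2 : MemLp g (ENNReal.ofReal (2:ℝ)) μ := by
      rw [h2e]
      exact (memLp_two_iff_integrable_sq hgsm).mpr hg2I
    have hconj : Real.HolderConjugate 2 2 := Real.HolderConjugate.two_two
    have hCS := MeasureTheory.integral_mul_norm_le_Lp_mul_Lq hconj hφ2 hgL2
    -- step: ∫ φ g ≤ ∫ ‖φ‖ ‖g‖
    have habs : (∫ t, φ t * g t ∂μ) ≤ ∫ t, ‖φ t‖ * ‖g t‖ ∂μ := by
      refine le_trans (le_abs_self _) ?_
      rw [← Real.norm_eq_abs]
      refine (MeasureTheory.norm_integral_le_integral_norm _).trans (le_of_eq ?_)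
      simp only [norm_mul]
    -- compute ∫ ‖φ‖²
    have hφsq : (∫ t, ‖φ t‖ ^ (2:ℝ) ∂μ) = 2 / ((β + 1) * (2 * β + 1)) := by
      have : (∫ t, ‖φ t‖ ^ (2:ℝ) ∂μ) = ∫ t, (1 - t ^ β) ^ 2 / β ^ 2 ∂μ := by
        refine integral_congr_ae (Eventually.of_forall fun t => ?_)
        show ‖φ t‖ ^ (2:ℝ) = (1 - t ^ β) ^ 2 / β ^ 2
        rw [Real.norm_eq_abs, show (2:ℝ) = ((2:ℕ):ℝ) by norm_num, Real.rpow_natCast, sq_abs]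
        show ((1 - t ^ β) / β) ^ 2 = _
        rw [div_pow]
      rw [this, hμ, ← intervalIntegral.integral_of_le (by norm_num : (0:ℝ) ≤ 1),
        intervalIntegral.integral_div, sq_one_sub_rpow_integral hβ]
      field_simp
    -- bound ∫ ‖g‖²
    have hgsq : (∫ t, ‖g t‖ ^ (2:ℝ) ∂μ) ≤ 1 := by
      have : (∫ t, ‖g t‖ ^ (2:ℝ) ∂μ) = ∫ t, g t ^ 2 ∂μ := by
        refine integral_congr_ae (Eventually.of_forall fun t => ?_)
        show ‖g t‖ ^ (2:ℝ) = g t ^ 2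
        rw [Real.norm_eq_abs, show (2:ℝ) = ((2:ℕ):ℝ) by norm_num, Real.rpow_natCast, sq_abs]
      rw [this, hμ, ← intervalIntegral.integral_of_le (by norm_num : (0:ℝ) ≤ 1)]
      exact hgle
    have hgsq0 : (0:ℝ) ≤ ∫ t, ‖g t‖ ^ (2:ℝ) ∂μ :=
      integral_nonneg fun t => Real.rpow_nonneg (norm_nonneg _) _
    have hfinal : (∫ t, φ t * g t ∂μ)
        ≤ Real.sqrt (2 / ((β + 1) * (2 * β + 1))) := by
      refine habs.trans (hCS.trans ?_)
      rw [hφsq]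
      have e1 : (2 / ((β + 1) * (2 * β + 1))) ^ (1 / (2:ℝ))
          = Real.sqrt (2 / ((β + 1) * (2 * β + 1))) := (Real.sqrt_eq_rpow _).symm
      rw [e1]
      have e2 : (∫ t, ‖g t‖ ^ (2:ℝ) ∂μ) ^ (1 / (2:ℝ)) ≤ 1 :=
        Real.rpow_le_one hgsq0 hgsq (by norm_num)
      calc Real.sqrt (2 / ((β + 1) * (2 * β + 1))) * (∫ t, ‖g t‖ ^ (2:ℝ) ∂μ) ^ (1 / (2:ℝ))
          ≤ Real.sqrt (2 / ((β + 1) * (2 * β + 1))) * 1 := by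
            exact mul_le_mul_of_nonneg_left e2 (Real.sqrt_nonneg _)
        _ = _ := mul_one _
    rw [hstep]
    calc ρ₂⁻¹ * (∫ t, φ t * g t ∂μ)
        ≤ ρ₂⁻¹ * Real.sqrt (2 / ((β + 1) * (2 * β + 1))) := by
          exact mul_le_mul_of_nonneg_left hfinal (by positivity)
      _ = _ := const_eval h1 h2
  · set β : ℝ := (1 + ρ₁) / ρ₂ with hβdef
    set α : ℝ := (1 + ρ₁ - ρ₂) / ρ₂ with hαdef
    have hρ : ρ₂ ≠ 0 := ne_of_gt h2
    have hβ : 0 < β := div_pos (by linarith) h2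
    have hαβ : α + 1 = β := by rw [hαdef, hβdef]; field_simp; ring
    have hD : (0:ℝ) < (β + 1) * (2 * β + 1) := by positivity
    have hC : (∫ y in (0:ℝ)..1, (1 - y ^ β) ^ 2) = 2 * β ^ 2 / ((β + 1) * (2 * β + 1)) :=
      sq_one_sub_rpow_integral hβ
    set s : ℝ := Real.sqrt (∫ y in (0:ℝ)..1, (1 - y ^ β) ^ 2) with hsdef
    have hs : 0 < s := by
      rw [hsdef, hC]; positivity
    -- pointwise formula for the integrand
    have hpt : ∀ x ∈ Set.uIcc (0:ℝ) 1,
        x ^ α * (∫ t in (0:ℝ)..x, (1 - t ^ β) / s)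
          = (x ^ β - x ^ (2 * β) / (β + 1)) / s := by
      intro x hx
      rw [Set.uIcc_of_le (by norm_num : (0:ℝ) ≤ 1)] at hx
      have hx0 : (0:ℝ) ≤ x := hx.1
      have hinner : (∫ t in (0:ℝ)..x, (1 - t ^ β) / s)
          = (x - x ^ (β + 1) / (β + 1)) / s := by
        rw [intervalIntegral.integral_div]
        congr 1
        rw [intervalIntegral.integral_sub intervalIntegrable_const
          (intervalIntegrable_rpow' (by linarith))]
        rw [integral_rpow (Or.inl (by linarith : (-1:ℝ) < β))]
        simp [Real.zero_rpow (by linarith : β + 1 ≠ 0)]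
      rw [hinner]
      rcases eq_or_lt_of_le hx0 with h0 | h0
      · rw [← h0]
        rw [Real.zero_rpow (by linarith : β ≠ 0),
          Real.zero_rpow (by linarith : β + 1 ≠ 0),
          Real.zero_rpow (by positivity : 2 * β ≠ 0)]
        simp
      · have e1 : x ^ α * x = x ^ β := by
          rw [← Real.rpow_add_one (ne_of_gt h0), hαβ]
        have e2 : x ^ α * x ^ (β + 1) = x ^ (2 * β) := by
          rw [← Real.rpow_add h0]
          congr 1; linarith
        field_simp
        rw [← e1, mul_comm β 2, ← e2]
        ring
    rw [intervalIntegral.integral_congr hpt]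
    -- compute the outer integral
    have houter : (∫ x in (0:ℝ)..1, (x ^ β - x ^ (2 * β) / (β + 1)) / s)
        = (2 * β / ((β + 1) * (2 * β + 1))) / s := by
      rw [intervalIntegral.integral_div]
      congr 1
      rw [intervalIntegral.integral_sub (intervalIntegrable_rpow' (by linarith))
        ((intervalIntegrable_rpow' (by linarith : (-1:ℝ) < 2 * β)).div_const _)]
      rw [intervalIntegral.integral_div]
      rw [integral_rpow (Or.inl (by linarith : (-1:ℝ) < β)),
        integral_rpow (Or.inl (by linarith : (-1:ℝ) < 2 * β))]
      rw [Real.one_rpow, Real.one_rpow, Real.zero_rpow (by linarith : β + 1 ≠ 0),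
        Real.zero_rpow (by positivity : 2 * β + 1 ≠ 0)]
      field_simp
      ring
    rw [houter]
    -- final arithmetic
    have hs_eq : s = β * Real.sqrt (2 / ((β + 1) * (2 * β + 1))) := by
      rw [hsdef, hC, show 2 * β ^ 2 / ((β + 1) * (2 * β + 1))
          = β ^ 2 * (2 / ((β + 1) * (2 * β + 1))) by ring,
        Real.sqrt_mul (sq_nonneg β), Real.sqrt_sq hβ.le]
    rw [hs_eq]
    have hu : (0:ℝ) < Real.sqrt (2 / ((β + 1) * (2 * β + 1))) := by positivity
    have key : 2 * β / ((β + 1) * (2 * β + 1)) / (β * Real.sqrt (2 / ((β + 1) * (2 * β + 1))))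
        = Real.sqrt (2 / ((β + 1) * (2 * β + 1))) := by
      rw [show 2 * β / ((β + 1) * (2 * β + 1)) = β * (2 / ((β + 1) * (2 * β + 1))) by ring]
      rw [mul_div_mul_left _ _ (ne_of_gt hβ)]
      exact Real.div_sqrt
    rw [key]
    exact const_eval h1 h2
end

section
/- Let p ∈ [0,1/2), â_n = Γ(n)Γ(1+p)/Γ(n+p), and ŝ_n² = Σ_{k=1}^n â_k². Then â_n/ŝ_n = √(1−2p)·n^{−1/2}·(1 + O(n^{2p−1})) as n → ∞. -/
open Filter Real Finset


lemma rec1 (p : ℝ) (hp0 : 0 ≤ p) (a : ℕ → ℝ) (ha1 : a 1 = 1)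
    (ha : ∀ n : ℕ, 2 ≤ n → a n = Real.Gamma n * Real.Gamma (1 + p) / Real.Gamma (n + p)) :
    ∀ n : ℕ, 1 ≤ n → a (n + 1) = a n * ((n : ℝ) / (n + p)) := by
  have hG1 : 0 < Real.Gamma (1 + p) := Real.Gamma_pos_of_pos (by linarith)
  intro n hn
  have hGn : ∀ m : ℕ, 1 ≤ m → 0 < Real.Gamma ((m : ℝ) + p) := by
    intro m hm
    exact Real.Gamma_pos_of_pos (by positivity)
  rcases eq_or_lt_of_le hn with h | h
  · -- n = 1
    rw [← h]
    rw [ha 2 le_rfl]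
    have h2 : ((2:ℕ):ℝ) + p = (1 + p) + 1 := by push_cast; ring
    rw [h2, Real.Gamma_add_one (by linarith), show ((2:ℕ):ℝ) = (1:ℝ)+1 by norm_num,
      Real.Gamma_add_one one_ne_zero, Real.Gamma_one, ha1]
    field_simp
    ring
  · -- n ≥ 2
    have hn2 : 2 ≤ n := h
    rw [ha n hn2, ha (n+1) (by omega)]
    have e1 : ((n:ℕ):ℝ) + 1 + p = ((n:ℝ) + p) + 1 := by ring
    have e2 : (((n+1:ℕ)):ℝ) = (n:ℝ) + 1 := by push_cast; ring
    have e3 : Real.Gamma ((n:ℝ)+p+1) = ((n:ℝ)+p)*Real.Gamma ((n:ℝ)+p) :=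
      Real.Gamma_add_one (by positivity)
    rw [e2, e1, Real.Gamma_add_one (by positivity : (n:ℝ) ≠ 0), e3]
    have := (hGn n (by omega)).ne'
    have hGnn : Real.Gamma (n:ℝ) ≠ 0 := (Real.Gamma_pos_of_pos (by positivity : (0:ℝ) < n)).ne'
    field_simp

section
variable (p : ℝ) (a : ℕ → ℝ) (hp0 : 0 ≤ p) (ha1 : a 1 = 1)
  (hrec : ∀ n : ℕ, 1 ≤ n → a (n + 1) = a n * ((n : ℝ) / (n + p)))

include hp0 ha1 hrec

lemma apos : ∀ n : ℕ, 1 ≤ n → 0 < a n := by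
  intro n hn
  induction n with
  | zero => omega
  | succ m ih =>
    rcases Nat.eq_zero_or_pos m with h | h
    · subst h; simp [ha1]
    · have hm : 1 ≤ m := h
      rw [hrec m hm]
      have := ih hm
      have hm' : (0:ℝ) < m := by exact_mod_cast hm
      positivity

lemma ale1 : ∀ n : ℕ, 1 ≤ n → a n ≤ 1 := by
  intro n hn
  induction n with
  | zero => omega
  | succ m ih =>
    rcases Nat.eq_zero_or_pos m with h | h
    · subst h; simp [ha1]
    · have hm : 1 ≤ m := h
      rw [hrec m hm]
      have hm' : (0:ℝ) < m := by exact_mod_cast hm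
      have h1 : (m:ℝ) / (m + p) ≤ 1 := by
        rw [div_le_one (by linarith)]; linarith
      have := apos p a hp0 ha1 hrec m hm
      nlinarith [ih hm]

lemma aprod : ∀ n : ℕ, a (n + 1) * ∏ j ∈ Finset.Icc 1 n, (((j:ℝ) + p) / j) = 1 := by
  intro n
  induction n with
  | zero => simpa using ha1
  | succ m ih =>
    rw [Finset.prod_Icc_succ_top (by omega), hrec (m+1) (by omega)]
    have hm' : (0:ℝ) < (m:ℝ) + 1 := by positivity
    have hc : ((m+1:ℕ):ℝ) = (m:ℝ) + 1 := by push_cast; ring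
    rw [hc]
    have hfac : ((m:ℝ)+1) / ((m:ℝ)+1+p) * (((m:ℝ)+1+p) / ((m:ℝ)+1)) = 1 := by
      rw [div_mul_div_comm, div_eq_one_iff_eq (by positivity)]
      ring
    calc a (m+1) * (((m:ℝ)+1) / ((m:ℝ)+1+p)) *
          ((∏ j ∈ Finset.Icc 1 m, (((j:ℝ) + p) / j)) * (((m:ℝ)+1+p) / ((m:ℝ)+1)))
        = (a (m+1) * ∏ j ∈ Finset.Icc 1 m, (((j:ℝ) + p) / j)) *
          (((m:ℝ)+1) / ((m:ℝ)+1+p) * (((m:ℝ)+1+p) / ((m:ℝ)+1))) := by ring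
      _ = 1 := by rw [ih, hfac, one_mul]

lemma harmonic_le : ∀ n : ℕ, 1 ≤ n → ∑ j ∈ Finset.Icc 1 n, (1 / (j:ℝ)) ≤ 1 + Real.log n := by
  intro n hn
  induction n with
  | zero => omega
  | succ m ih =>
    rcases Nat.eq_zero_or_pos m with h | h
    · subst h; simp
    · have hm : 1 ≤ m := h
      rw [Finset.sum_Icc_succ_top (by omega)]
      have hm' : (0:ℝ) < m := by exact_mod_cast hm
      have hstep : (1:ℝ) / (m + 1) ≤ Real.log (m+1) - Real.log m := by
        have h1 : Real.log ((m:ℝ)/(m+1)) ≤ (m:ℝ)/(m+1) - 1 :=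
          Real.log_le_sub_one_of_pos (by positivity)
        rw [Real.log_div (by positivity) (by positivity)] at h1
        have : (m:ℝ)/(m+1) - 1 = -(1/(m+1)) := by field_simp; ring
        linarith [this ▸ h1]
      have := ih hm
      push_cast
      push_cast at this
      linarith

lemma alower : ∀ n : ℕ, 1 ≤ n → Real.exp (-p) * (n:ℝ) ^ (-p) ≤ a n := by
  intro n hn
  have hpos := apos p a hp0 ha1 hrec n hn
  rcases Nat.eq_or_lt_of_le hn with h | h
  · rw [← h]; simp [ha1, Real.exp_nonneg]
    nlinarith [Real.exp_le_one_iff.mpr (by linarith : -p ≤ 0), Real.exp_pos (-p)]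
  · obtain ⟨m, rfl⟩ : ∃ m, n = m + 1 := ⟨n - 1, by omega⟩
    have hm : 1 ≤ m := by omega
    have hprod := aprod p a hp0 ha1 hrec m
    -- ∏ ((j+p)/j) ≤ exp (p * (1 + log m)) ≤ exp p * (m+1)^p
    have hprodle : ∏ j ∈ Finset.Icc 1 m, (((j:ℝ) + p) / j) ≤
        Real.exp (∑ j ∈ Finset.Icc 1 m, p * (1/(j:ℝ))) := by
      rw [Real.exp_sum]
      apply Finset.prod_le_prod
      · intro j hj
        have hj1 : 1 ≤ j := (Finset.mem_Icc.mp hj).1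
        have : (0:ℝ) < j := by exact_mod_cast hj1
        positivity
      · intro j hj
        have hj1 : 1 ≤ j := (Finset.mem_Icc.mp hj).1
        have hjp : (0:ℝ) < j := by exact_mod_cast hj1
        have : ((j:ℝ) + p)/j = 1 + p * (1/j) := by field_simp
        rw [this]
        have := Real.add_one_le_exp (p * (1/(j:ℝ)))
        linarith
    have hsum : ∑ j ∈ Finset.Icc 1 m, p * (1/(j:ℝ)) ≤ p * (1 + Real.log (m+1)) := by
      rw [← Finset.mul_sum]
      have h1 := harmonic_le p a hp0 ha1 hrec m hm
      have h2 : Real.log m ≤ Real.log (m+1) := by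
        apply Real.log_le_log (by exact_mod_cast hm)
        push_cast; linarith
      nlinarith
    have hexp : Real.exp (p * (1 + Real.log ((m:ℝ)+1))) = Real.exp p * ((m:ℝ)+1) ^ p := by
      rw [mul_add, Real.exp_add, mul_one, mul_comm p, Real.exp_mul, Real.exp_log (by positivity)]
    have hP : ∏ j ∈ Finset.Icc 1 m, (((j:ℝ) + p) / j) ≤ Real.exp p * ((m:ℝ)+1) ^ p := by
      calc ∏ j ∈ Finset.Icc 1 m, (((j:ℝ) + p) / j) ≤ _ := hprodle
        _ ≤ Real.exp (p * (1 + Real.log ((m:ℝ)+1))) := Real.exp_le_exp.mpr hsum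
        _ = _ := hexp
    have hPpos : 0 < ∏ j ∈ Finset.Icc 1 m, (((j:ℝ) + p) / j) := by
      apply Finset.prod_pos
      intro j hj
      have hj1 : 1 ≤ j := (Finset.mem_Icc.mp hj).1
      have : (0:ℝ) < j := by exact_mod_cast hj1
      positivity
    have haeq : a (m+1) = (∏ j ∈ Finset.Icc 1 m, (((j:ℝ) + p) / j))⁻¹ := by
      rw [← one_div]
      exact eq_div_of_mul_eq hPpos.ne' hprod
    rw [haeq]
    have hcast : ((m+1:ℕ):ℝ) = (m:ℝ)+1 := by push_cast; ring
    rw [hcast, Real.rpow_neg (by positivity), Real.exp_neg]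
    rw [← mul_inv]
    exact inv_anti₀ hPpos hP
end

lemma sumsq_le : ∀ n : ℕ, 1 ≤ n → ∑ k ∈ Finset.Icc 1 n, (1 / (k:ℝ)^2) ≤ 2 - 1/(n:ℝ) := by
  intro n hn
  induction n with
  | zero => omega
  | succ m ih =>
    rcases Nat.eq_zero_or_pos m with h | h
    · subst h; norm_num
    · have hm : 1 ≤ m := h
      rw [Finset.sum_Icc_succ_top (by omega)]
      have hm' : (0:ℝ) < m := by exact_mod_cast hm
      have key : (1:ℝ)/((m:ℝ)+1)^2 ≤ 1/(m:ℝ) - 1/((m:ℝ)+1) := by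
        rw [div_sub_div _ _ (by positivity) (by positivity)]
        rw [div_le_div_iff₀ (by positivity) (by positivity)]
        ring_nf
        nlinarith
      have := ih hm
      push_cast
      push_cast at this
      linarith

section
variable (p : ℝ) (a : ℕ → ℝ) (hp0 : 0 ≤ p) (ha1 : a 1 = 1)
  (hrec : ∀ n : ℕ, 1 ≤ n → a (n + 1) = a n * ((n : ℝ) / (n + p)))

include hp0 ha1 hrec

lemma keyid : ∀ n : ℕ,
    (1 - 2*p) * ∑ k ∈ Finset.Icc 1 n, (a k)^2 =
      ((n:ℝ) + 3*p/2) * (a (n+1))^2 - 3*p/2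
        - (p^3/2) * ∑ k ∈ Finset.Icc 1 n, (a k)^2 / ((k:ℝ) + p)^2 := by
  intro n
  induction n with
  | zero => simp [ha1]
  | succ m ih =>
    rw [Finset.sum_Icc_succ_top (by omega : 1 ≤ m + 1),
        Finset.sum_Icc_succ_top (by omega : 1 ≤ m + 1)]
    rw [hrec (m+1) (by omega)]
    have hq : ((m+1:ℕ):ℝ) = (m:ℝ) + 1 := by push_cast; ring
    rw [hq]
    have hden : ((m:ℝ) + 1 + p) ≠ 0 := by positivity
    rw [mul_add, ih]
    field_simp
    ring
end

section
set_option maxHeartbeats 1000000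
variable (p : ℝ) (a : ℕ → ℝ) (hp0 : 0 ≤ p) (hp1 : p < 1/2) (ha1 : a 1 = 1)
  (hrec : ∀ n : ℕ, 1 ≤ n → a (n + 1) = a n * ((n : ℝ) / (n + p)))
  (hpos : ∀ n : ℕ, 1 ≤ n → 0 < a n)
  (hle1 : ∀ n : ℕ, 1 ≤ n → a n ≤ 1)
  (hlow : ∀ n : ℕ, 1 ≤ n → Real.exp (-p) * (n:ℝ) ^ (-p) ≤ a n)
  (hkey : ∀ n : ℕ,
    (1 - 2*p) * ∑ k ∈ Finset.Icc 1 n, (a k)^2 =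
      ((n:ℝ) + 3*p/2) * (a (n+1))^2 - 3*p/2
        - (p^3/2) * ∑ k ∈ Finset.Icc 1 n, (a k)^2 / ((k:ℝ) + p)^2)
  (hss : ∀ n : ℕ, 1 ≤ n → ∑ k ∈ Finset.Icc 1 n, (1 / (k:ℝ)^2) ≤ 2 - 1/(n:ℝ))

include hp0 hp1 ha1 hrec hpos hle1 hlow hkey hss

lemma tbound : ∀ n : ℕ, 1 ≤ n →
    |(1 - 2*p) * (∑ k ∈ Finset.Icc 1 n, (a k)^2) - (n:ℝ) * (a n)^2|
      ≤ 6 * ((n:ℝ) * (a n)^2) * (n:ℝ) ^ (2*p - 1) := by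
  intro n hn
  set q : ℝ := (n:ℝ) with hqdef
  have hq1 : (1:ℝ) ≤ q := Nat.one_le_cast.mpr hn
  have hq0 : (0:ℝ) < q := by linarith
  set A : ℝ := a n with hAdef
  have hA0 : 0 < A := hpos n hn
  have hA1 : A ≤ 1 := hle1 n hn
  set S2 : ℝ := ∑ k ∈ Finset.Icc 1 n, (a k)^2 with hS2def
  set R : ℝ := ∑ k ∈ Finset.Icc 1 n, (a k)^2 / ((k:ℝ) + p)^2 with hRdef
  have hR0 : 0 ≤ R := by
    apply Finset.sum_nonneg; intro k hk; positivity
  have hR2 : R ≤ 2 := by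
    have h1 : R ≤ ∑ k ∈ Finset.Icc 1 n, (1 / (k:ℝ)^2) := by
      apply Finset.sum_le_sum
      intro k hk
      have hk1 : 1 ≤ k := (Finset.mem_Icc.mp hk).1
      have hk' : (1:ℝ) ≤ (k:ℝ) := by exact_mod_cast hk1
      have hak := hle1 k hk1
      have hak0 := hpos k hk1
      rw [div_le_div_iff₀ (by positivity) (by positivity)]
      have h1 : a k ^ 2 ≤ 1 := by nlinarith
      have h2 : (k:ℝ)^2 ≤ ((k:ℝ)+p)^2 := by nlinarith
      calc a k ^2 * (k:ℝ)^2 ≤ 1 * (k:ℝ)^2 := by nlinarith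
        _ ≤ 1 * ((k:ℝ)+p)^2 := by nlinarith
    have h2 := hss n hn
    have h3 : (0:ℝ) < 1/q := by positivity
    linarith
  have hrecn := hrec n hn
  have hid := hkey n
  rw [hrecn] at hid
  rw [← hqdef, ← hAdef, ← hS2def, ← hRdef] at hid
  have hqp : (0:ℝ) < q + p := by linarith
  -- the coefficient error term
  have hX : ((q + 3*p/2) * (A * (q/(q+p)))^2 - q*A^2) = -(A^2 * q * (p*q/2 + p^2))/(q+p)^2 := by
    rw [eq_div_iff (by positivity)]
    field_simp
    ring
  have hXle : (q + 3*p/2) * (A * (q/(q+p)))^2 - q*A^2 ≤ 0 := by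
    rw [hX, neg_div]
    simp only [Left.neg_nonpos_iff]
    positivity
  have hXge : -(1/2 : ℝ) ≤ (q + 3*p/2) * (A * (q/(q+p)))^2 - q*A^2 := by
    rw [hX, neg_div]
    have h4 : A^2*q*(p*q/2+p^2) / (q+p)^2 ≤ 1/2 := by
      rw [div_le_iff₀ (by positivity)]
      have hA2 : A^2 ≤ 1 := by nlinarith
      have hc : p*q/2 + p^2 ≤ q/2 := by nlinarith
      have t1 : (0:ℝ) ≤ p*q/2+p^2 := by positivity
      have t2 : A^2*q ≤ q := by nlinarith
      have t3 : A^2*q*(p*q/2+p^2) ≤ q*(q/2) :=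
        calc A^2*q*(p*q/2+p^2) ≤ q*(p*q/2+p^2) := mul_le_mul_of_nonneg_right t2 t1
          _ ≤ q*(q/2) := mul_le_mul_of_nonneg_left hc hq0.le
      nlinarith [t3, sq_nonneg p, mul_nonneg hp0 hq0.le]
    linarith
  have hp3 : p^3 ≤ 1/8 := by nlinarith
  have hp30 : 0 ≤ p^3 := by positivity
  have habs : |(1 - 2*p) * S2 - q * A^2| ≤ 2 := by
    rw [abs_le]
    constructor
    · nlinarith
    · nlinarith
  -- lower bound on q * A^2
  have hlowA := hlow n hn
  rw [← hqdef, ← hAdef] at hlowA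
  have hsq : (Real.exp (-p) * q ^ (-p))^2 ≤ A^2 := by
    apply pow_le_pow_left₀ (by positivity) hlowA
  have e1 : (Real.exp (-p) * q ^ (-p))^2 = Real.exp (-(2*p)) * q ^ (-(2*p)) := by
    rw [mul_pow, sq, sq, ← Real.exp_add, ← Real.rpow_add hq0]
    ring_nf
  have hqA : Real.exp (-(2*p)) * q ^ (1 - 2*p) ≤ q * A^2 := by
    have h5 : q ^ (1 - 2*p) = q * q ^ (-(2*p)) := by
      rw [show (1 - 2*p) = 1 + (-(2*p)) by ring, Real.rpow_add hq0, Real.rpow_one]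
    rw [h5]
    calc Real.exp (-(2*p)) * (q * q ^ (-(2*p))) = q * (Real.exp (-(2*p)) * q ^ (-(2*p))) := by ring
      _ ≤ q * A^2 := by
          apply mul_le_mul_of_nonneg_left _ hq0.le
          rw [← e1]; exact hsq
  have hexp3 : (1/3:ℝ) ≤ Real.exp (-(2*p)) := by
    have h6 : Real.exp (-1) ≤ Real.exp (-(2*p)) := Real.exp_le_exp.mpr (by linarith)
    have h9 : Real.exp 1 ≤ 3 := by
      have := Real.exp_one_lt_d9
      linarith
    have h10 : (1/3:ℝ) ≤ 1 / Real.exp 1 :=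
      one_div_le_one_div_of_le (Real.exp_pos 1) h9
    rw [Real.exp_neg, ← one_div] at h6
    linarith
  have hmul : q ^ (1-2*p) * q ^ (2*p-1) = 1 := by
    rw [← Real.rpow_add hq0]
    norm_num
  have hrp0 : (0:ℝ) < q ^ (2*p-1) := Real.rpow_pos_of_pos hq0 _
  have hrp1 : (0:ℝ) ≤ q ^ (1-2*p) := (Real.rpow_pos_of_pos hq0 _).le
  have h7 : (1/3) * q^(1-2*p) ≤ q*A^2 :=
    le_trans (mul_le_mul_of_nonneg_right hexp3 hrp1) hqA
  have h6 : 2 ≤ 6 * (q*A^2) * q^(2*p-1) := by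
    nlinarith [mul_le_mul_of_nonneg_right h7 hrp0.le]
  linarith [habs]
end

section
set_option maxHeartbeats 1000000
set_option linter.unusedSectionVars false
variable (p : ℝ) (a : ℕ → ℝ) (s : ℕ → ℝ) (hp0 : 0 ≤ p) (hp1 : p < 1/2) (ha1 : a 1 = 1)
  (hpos : ∀ n : ℕ, 1 ≤ n → 0 < a n)
  (hs : ∀ n : ℕ, s n = Real.sqrt (∑ k ∈ Finset.Icc 1 n, (a k) ^ 2))
  (htb : ∀ n : ℕ, 1 ≤ n →
    |(1 - 2*p) * (∑ k ∈ Finset.Icc 1 n, (a k)^2) - (n:ℝ) * (a n)^2|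
      ≤ 6 * ((n:ℝ) * (a n)^2) * (n:ℝ) ^ (2*p - 1))

include hp0 hp1 ha1 hpos hs htb

lemma final : ∃ C : ℝ, 0 < C ∧ ∀ᶠ n : ℕ in atTop,
    |a n / s n / (Real.sqrt (1 - 2 * p) * (n : ℝ) ^ (-(1:ℝ)/2)) - 1|
      ≤ C * (n : ℝ) ^ (2 * p - 1) := by
  have h2p : (0:ℝ) < 1 - 2*p := by linarith
  refine ⟨16, by norm_num, ?_⟩
  have hten : Tendsto (fun n : ℕ => ((n:ℝ)) ^ (2*p - 1)) atTop (nhds 0) := by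
    have h1 : Tendsto (fun x : ℝ => x ^ (-(1 - 2*p))) atTop (nhds 0) :=
      tendsto_rpow_neg_atTop h2p
    have h2 := h1.comp tendsto_natCast_atTop_atTop (α := ℕ)
    have he : (fun n : ℕ => ((n:ℝ)) ^ (2*p - 1)) = (fun x : ℝ => x ^ (-(1 - 2*p))) ∘ Nat.cast := by
      funext n
      simp only [Function.comp_apply]
      congr 1
      ring
    rw [he]
    exact h2
  have hev : ∀ᶠ n : ℕ in atTop, ((n:ℝ)) ^ (2*p - 1) < 1/16 :=
    hten.eventually_lt_const (by norm_num)
  filter_upwards [hev, eventually_ge_atTop 1] with n hεs hn1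
  set q : ℝ := (n:ℝ) with hqdef
  have hq1 : (1:ℝ) ≤ q := Nat.one_le_cast.mpr hn1
  have hq0 : (0:ℝ) < q := by linarith
  set A : ℝ := a n with hAdef
  have hA0 : 0 < A := hpos n hn1
  set S2 : ℝ := ∑ k ∈ Finset.Icc 1 n, (a k)^2 with hS2def
  set ε : ℝ := q ^ (2*p - 1) with hεdef
  have hε0 : 0 ≤ ε := (Real.rpow_pos_of_pos hq0 _).le
  have htbn := htb n hn1
  rw [← hqdef, ← hAdef, ← hS2def, ← hεdef] at htbn
  have hS21 : 1 ≤ S2 := by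
    have h1 : (1:ℕ) ∈ Finset.Icc 1 n := Finset.mem_Icc.mpr ⟨le_rfl, hn1⟩
    have h2 := Finset.single_le_sum (f := fun k => (a k)^2)
      (fun k _ => sq_nonneg (a k)) h1
    simpa [ha1] using h2
  have hS2pos : (0:ℝ) < S2 := by linarith
  have hqA0 : (0:ℝ) < q * A^2 := by positivity
  have hhalf : q * A^2 / 2 ≤ (1 - 2*p) * S2 := by
    have h1 := (abs_le.mp htbn).2
    have h2 := (abs_le.mp htbn).1
    have h3 : 6 * (q*A^2) * ε ≤ 6 * (q*A^2) * (1/16) :=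
      mul_le_mul_of_nonneg_left hεs.le (by positivity)
    nlinarith
  have hden : (0:ℝ) < (1 - 2*p) * S2 := by positivity
  have hsn := hs n
  rw [← hS2def] at hsn
  -- rewrite the rpow as inverse sqrt
  have hrw : q ^ (-(1:ℝ)/2) = (Real.sqrt q)⁻¹ := by
    rw [show (-(1:ℝ)/2) = -(1/2 : ℝ) by norm_num, Real.rpow_neg hq0.le, Real.sqrt_eq_rpow]
  set u : ℝ := A * Real.sqrt q / (Real.sqrt (1 - 2*p) * Real.sqrt S2) with hudef
  have hsqq : (0:ℝ) < Real.sqrt q := Real.sqrt_pos.mpr hq0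
  have hsq2p : (0:ℝ) < Real.sqrt (1 - 2*p) := Real.sqrt_pos.mpr h2p
  have hsqS2 : (0:ℝ) < Real.sqrt S2 := Real.sqrt_pos.mpr hS2pos
  have hgoal_eq : a n / s n / (Real.sqrt (1 - 2*p) * q ^ (-(1:ℝ)/2)) = u := by
    rw [hsn, hrw, hudef, ← hAdef]
    field_simp
  rw [hgoal_eq]
  have hu0 : 0 ≤ u := by positivity
  have hu2 : u^2 = q * A^2 / ((1 - 2*p) * S2) := by
    rw [hudef, div_pow, mul_pow, mul_pow,
      Real.sq_sqrt hq0.le, Real.sq_sqrt h2p.le, Real.sq_sqrt hS2pos.le]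
    ring
  have hu21 : |u^2 - 1| ≤ 12 * ε := by
    have he : u^2 - 1 = (q*A^2 - (1 - 2*p)*S2) / ((1 - 2*p)*S2) := by
      rw [hu2]
      field_simp
    rw [he, abs_div, abs_of_pos hden, div_le_iff₀ hden]
    have h1 : |q*A^2 - (1 - 2*p)*S2| = |(1 - 2*p)*S2 - q*A^2| := abs_sub_comm _ _
    rw [h1]
    have h2 : 6 * (q*A^2) * ε ≤ 12 * ε * ((1 - 2*p)*S2) := by nlinarith
    linarith [htbn]
  have hu1 : |u - 1| ≤ |u^2 - 1| := by
    have h1 : |u^2 - 1| = |u - 1| * (u + 1) := by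
      rw [show u^2 - 1 = (u-1)*(u+1) by ring, abs_mul, abs_of_pos (by linarith : (0:ℝ) < u+1)]
    nlinarith [abs_nonneg (u - 1)]
  calc |u - 1| ≤ |u^2 - 1| := hu1
    _ ≤ 12 * ε := hu21
    _ ≤ 16 * ε := by linarith
end

open Filter Real

/-- For `p ∈ [0,1/2)`, `â_n/ŝ_n = √(1-2p) n^{-1/2} (1 + O(n^{2p-1}))`. -/
theorem stmt6 (p : ℝ) (hp0 : 0 ≤ p) (hp1 : p < 1 / 2) (a : ℕ → ℝ) (s : ℕ → ℝ)
    (ha1 : a 1 = 1)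
    (ha : ∀ n : ℕ, 2 ≤ n → a n = Real.Gamma n * Real.Gamma (1 + p) / Real.Gamma (n + p))
    (hs : ∀ n : ℕ, s n = Real.sqrt (∑ k ∈ Finset.Icc 1 n, (a k) ^ 2)) :
    ∃ C : ℝ, 0 < C ∧ ∀ᶠ n : ℕ in atTop,
      |a n / s n / (Real.sqrt (1 - 2 * p) * (n : ℝ) ^ (-(1:ℝ)/2)) - 1|
        ≤ C * (n : ℝ) ^ (2 * p - 1) := by
  have hrec := rec1 p hp0 a ha1 ha
  have hpos := apos p a hp0 ha1 hrec
  have hle1 := ale1 p a hp0 ha1 hrec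
  have hlow := alower p a hp0 ha1 hrec
  have hkey := keyid p a hp0 ha1 hrec
  have htb := tbound p a hp0 hp1 ha1 hrec hpos hle1 hlow hkey sumsq_le
  exact final p a s hp0 hp1 ha1 hpos hs htb
end

section
/- Let p = 1/2, â_n = Γ(n)Γ(3/2)/Γ(n+1/2), and ŝ_n² = Σ_{k=1}^n â_k². Then â_n/ŝ_n = (n log n)^{−1/2}·(1 + O((log n)^{−1})) as n → ∞. -/
open Filter Real

private lemma gamma_sq_le (x : ℝ) (hx : 1/2 < x) :
    Real.Gamma x ^ 2 ≤ Real.Gamma (x - 1/2) * Real.Gamma (x + 1/2) := by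
  have h1 : (0:ℝ) < x - 1/2 := by linarith
  have h2 : (0:ℝ) < x + 1/2 := by linarith
  have := Real.convexOn_log_Gamma.2 (Set.mem_Ioi.mpr h1) (Set.mem_Ioi.mpr h2)
    (by norm_num : (0:ℝ) ≤ 1/2) (by norm_num : (0:ℝ) ≤ 1/2) (by norm_num)
  simp only [Function.comp_apply, smul_eq_mul] at this
  have hmid : (1/2:ℝ) * (x - 1/2) + 1/2 * (x + 1/2) = x := by ring
  rw [hmid] at this
  have hpos := Real.Gamma_pos_of_pos (lt_trans (by norm_num) hx)
  have h3 := Real.exp_le_exp.mpr (by linarith :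
    2 * Real.log (Real.Gamma x) ≤ Real.log (Real.Gamma (x-1/2)) + Real.log (Real.Gamma (x+1/2)))
  rw [Real.exp_add, Real.exp_log (Real.Gamma_pos_of_pos h1),
    Real.exp_log (Real.Gamma_pos_of_pos h2)] at h3
  calc Real.Gamma x ^ 2 = Real.exp (2 * Real.log (Real.Gamma x)) := by
        rw [two_mul, Real.exp_add, Real.exp_log hpos, ← sq]
    _ ≤ _ := h3

/-- the key two-sided bound: `1/n ≤ (Γ n / Γ (n+1/2))² ≤ (n+1/2)/n²` -/
private lemma t_bounds (n : ℕ) (hn : 1 ≤ n) :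
    1 / (n:ℝ) ≤ (Real.Gamma n / Real.Gamma (n + 1/2)) ^ 2 ∧
    (Real.Gamma n / Real.Gamma (n + 1/2)) ^ 2 ≤ ((n:ℝ) + 1/2) / (n:ℝ)^2 := by
  have hn0 : (0:ℝ) < n := by exact_mod_cast hn
  have hg : 0 < Real.Gamma (n:ℝ) := Real.Gamma_pos_of_pos hn0
  have hgh : 0 < Real.Gamma ((n:ℝ) + 1/2) := Real.Gamma_pos_of_pos (by linarith)
  have hrec : Real.Gamma ((n:ℝ) + 1) = n * Real.Gamma n := Real.Gamma_add_one hn0.ne'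
  constructor
  · -- Γ(n+1/2)² ≤ Γ n * Γ(n+1) = n Γn²
    have h := gamma_sq_le ((n:ℝ) + 1/2) (by linarith)
    have e1 : (n:ℝ) + 1/2 - 1/2 = n := by ring
    have e2 : (n:ℝ) + 1/2 + 1/2 = n + 1 := by ring
    rw [e1, e2, hrec] at h
    rw [div_pow, div_le_div_iff₀ hn0 (by positivity)]
    nlinarith
  · -- Γ(n+1)² ≤ Γ(n+1/2) Γ(n+3/2) = (n+1/2) Γ(n+1/2)²
    have h := gamma_sq_le ((n:ℝ) + 1) (by linarith)
    have e1 : (n:ℝ) + 1 - 1/2 = n + 1/2 := by ring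
    have e2 : (n:ℝ) + 1 + 1/2 = (n + 1/2) + 1 := by ring
    rw [e1, e2, Real.Gamma_add_one (by positivity : ((n:ℝ) + 1/2) ≠ 0), hrec] at h
    rw [div_pow, div_le_div_iff₀ (by positivity) (by positivity)]
    nlinarith

private lemma log_succ_bounds (x : ℝ) (hx : 0 < x) :
    1/(x+1) ≤ Real.log (x+1) - Real.log x ∧ Real.log (x+1) - Real.log x ≤ 1/x := by
  constructor
  · rw [← Real.log_div (by positivity) hx.ne']
    have h0 : (0:ℝ) < x/(x+1) := by positivity
    have h := Real.log_le_sub_one_of_pos h0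
    have heq : Real.log (x/(x+1)) = - Real.log ((x+1)/x) := by
      rw [← Real.log_inv]; congr 1; field_simp
    have h3 : x/(x+1) - 1 = -(1/(x+1)) := by field_simp; ring
    rw [heq] at h
    linarith
  · rw [← Real.log_div (by positivity) hx.ne']
    have h := Real.log_le_sub_one_of_pos (show (0:ℝ) < (x+1)/x by positivity)
    have h2 : (x+1)/x - 1 = 1/x := by field_simp; ring
    linarith

private lemma harmonic_bounds (n : ℕ) (hn : 1 ≤ n) :
    Real.log n ≤ ∑ k ∈ Finset.Icc 1 n, (1:ℝ)/k ∧
    ∑ k ∈ Finset.Icc 1 n, (1:ℝ)/k ≤ Real.log n + 1 := by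
  -- strengthen: log (n+1) ≤ sum ∧ sum ≤ log n + 1
  suffices h : Real.log ((n:ℝ)+1) ≤ ∑ k ∈ Finset.Icc 1 n, (1:ℝ)/k ∧
      ∑ k ∈ Finset.Icc 1 n, (1:ℝ)/k ≤ Real.log n + 1 by
    refine ⟨le_trans ?_ h.1, h.2⟩
    apply Real.log_le_log (by exact_mod_cast hn)
    linarith
  induction n with
  | zero => omega
  | succ m ih =>
    rcases Nat.eq_or_lt_of_le hn with h1 | h1
    · have : m = 0 := by omega
      subst this
      constructor
      · simp only [Nat.cast_one, Finset.Icc_self, Finset.sum_singleton]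
        norm_num
        have := Real.log_le_sub_one_of_pos (show (0:ℝ) < 2 by norm_num)
        linarith
      · simp only [Nat.cast_one, Finset.Icc_self, Finset.sum_singleton, Real.log_one]
        norm_num
    · have hm : 1 ≤ m := by omega
      have hm0 : (0:ℝ) < m := by exact_mod_cast hm
      obtain ⟨ihl, ihu⟩ := ih hm
      have hsum : ∑ k ∈ Finset.Icc 1 (m+1), (1:ℝ)/k
          = (∑ k ∈ Finset.Icc 1 m, (1:ℝ)/k) + 1/(m+1) := by
        rw [Finset.sum_Icc_succ_top (by omega)]
        push_cast; ring
      obtain ⟨hA, hB⟩ := log_succ_bounds m hm0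
      obtain ⟨hC, hD⟩ := log_succ_bounds ((m:ℝ)+1) (by positivity)
      constructor
      · rw [hsum]; push_cast
        -- log(m+2) ≤ sum + 1/(m+1); ihl : log(m+1) ≤ sum; hD : log(m+2)−log(m+1) ≤ 1/(m+1)
        linarith
      · rw [hsum]; push_cast
        -- sum + 1/(m+1) ≤ log(m+1)+1 ; ihu : sum ≤ log m + 1; hA : 1/(m+1) ≤ log(m+1)−log m
        linarith

private lemma sq_inv_bound (n : ℕ) (hn : 1 ≤ n) :
    ∑ k ∈ Finset.Icc 1 n, (1:ℝ)/(k:ℝ)^2 ≤ 2 - 1/n := by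
  induction n with
  | zero => omega
  | succ m ih =>
    rcases Nat.eq_or_lt_of_le hn with h1 | h1
    · have : m = 0 := by omega
      subst this
      simp only [Nat.cast_one, Finset.Icc_self, Finset.sum_singleton]
      norm_num
    · have hm : 1 ≤ m := by omega
      have hm0 : (0:ℝ) < m := by exact_mod_cast hm
      have := ih hm
      rw [Finset.sum_Icc_succ_top (by omega)]
      push_cast
      have key : 1/((m:ℝ)+1)^2 ≤ 1/m - 1/(m+1) := by
        rw [div_sub_div _ _ hm0.ne' (by positivity), div_le_div_iff₀ (by positivity) (by positivity)]
        nlinarith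
      linarith

set_option maxHeartbeats 1000000 in
/-- For `p = 1/2`, `â_n/ŝ_n = (n log n)^{-1/2} (1 + O((log n)⁻¹))`. -/
theorem stmt7 (a : ℕ → ℝ) (s : ℕ → ℝ)
    (ha1 : a 1 = 1)
    (ha : ∀ n : ℕ, 2 ≤ n →
      a n = Real.Gamma n * Real.Gamma (3 / 2) / Real.Gamma (n + 1 / 2))
    (hs : ∀ n : ℕ, s n = Real.sqrt (∑ k ∈ Finset.Icc 1 n, (a k) ^ 2)) :
    ∃ C : ℝ, 0 < C ∧ ∀ᶠ n : ℕ in atTop,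
      |a n / s n * Real.sqrt ((n : ℝ) * Real.log n) - 1| ≤ C / Real.log n := by
  set c : ℝ := Real.Gamma (3/2) with hc
  have hc0 : 0 < c := Real.Gamma_pos_of_pos (by norm_num)
  -- formula for a valid for all n ≥ 1
  have ha' : ∀ n : ℕ, 1 ≤ n → a n = Real.Gamma n * c / Real.Gamma (n + 1/2) := by
    intro n hn
    rcases Nat.eq_or_lt_of_le hn with h1 | h1
    · rw [← h1]; simp only [Nat.cast_one, Real.Gamma_one, one_mul, ha1]
      rw [show (1:ℝ) + 1/2 = 3/2 by norm_num, hc, div_self hc0.ne']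
    · rw [ha n (by omega)]
  -- bounds on a n ^ 2
  have ha2 : ∀ n : ℕ, 1 ≤ n →
      c^2 / n ≤ (a n)^2 ∧ (a n)^2 ≤ c^2 * (1/n + 1/(2*(n:ℝ)^2)) := by
    intro n hn
    have hn0 : (0:ℝ) < n := by exact_mod_cast hn
    obtain ⟨hl, hu⟩ := t_bounds n hn
    rw [ha' n hn]
    have heq : (Real.Gamma n * c / Real.Gamma (n + 1/2))^2
        = c^2 * (Real.Gamma n / Real.Gamma (n + 1/2))^2 := by ring
    rw [heq]
    constructor
    · rw [div_eq_mul_one_div]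
      exact mul_le_mul_of_nonneg_left hl (by positivity)
    · refine mul_le_mul_of_nonneg_left (hu.trans_eq ?_) (by positivity)
      field_simp
  -- bounds on s n ^ 2
  have hsum_pos : ∀ n : ℕ, 1 ≤ n → 0 < ∑ k ∈ Finset.Icc 1 n, (a k)^2 := by
    intro n hn
    apply Finset.sum_pos'
    · intro k _; positivity
    · refine ⟨1, Finset.mem_Icc.mpr ⟨le_refl 1, hn⟩, ?_⟩
      rw [ha1]; norm_num
  have hs_lb : ∀ n : ℕ, 1 ≤ n →
      c^2 * Real.log n ≤ ∑ k ∈ Finset.Icc 1 n, (a k)^2 := by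
    intro n hn
    calc c^2 * Real.log n ≤ c^2 * ∑ k ∈ Finset.Icc 1 n, (1:ℝ)/k :=
          mul_le_mul_of_nonneg_left (harmonic_bounds n hn).1 (by positivity)
      _ = ∑ k ∈ Finset.Icc 1 n, c^2/(k:ℝ) := by
          rw [Finset.mul_sum]
          exact Finset.sum_congr rfl fun k _ => by ring
      _ ≤ _ := Finset.sum_le_sum fun k hk => (ha2 k (Finset.mem_Icc.mp hk).1).1
  have hs_ub : ∀ n : ℕ, 1 ≤ n →
      ∑ k ∈ Finset.Icc 1 n, (a k)^2 ≤ c^2 * Real.log n + 2 * c^2 := by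
    intro n hn
    have h1 := (harmonic_bounds n hn).2
    have h2 := sq_inv_bound n hn
    have hn0 : (0:ℝ) < n := by exact_mod_cast hn
    have e : ∑ k ∈ Finset.Icc 1 n, c^2 * (1/(k:ℝ) + 1/(2*(k:ℝ)^2))
        = c^2 * (∑ k ∈ Finset.Icc 1 n, (1:ℝ)/k)
          + (c^2/2) * ∑ k ∈ Finset.Icc 1 n, (1:ℝ)/(k:ℝ)^2 := by
      rw [Finset.mul_sum, Finset.mul_sum, ← Finset.sum_add_distrib]
      exact Finset.sum_congr rfl fun k _ => by ring
    calc ∑ k ∈ Finset.Icc 1 n, (a k)^2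
        ≤ ∑ k ∈ Finset.Icc 1 n, c^2 * (1/(k:ℝ) + 1/(2*(k:ℝ)^2)) :=
          Finset.sum_le_sum fun k hk => (ha2 k (Finset.mem_Icc.mp hk).1).2
      _ = c^2 * (∑ k ∈ Finset.Icc 1 n, (1:ℝ)/k)
          + (c^2/2) * ∑ k ∈ Finset.Icc 1 n, (1:ℝ)/(k:ℝ)^2 := e
      _ ≤ c^2 * (Real.log n + 1) + (c^2/2) * (2 - 1/n) := by
          have hcn : (0:ℝ) ≤ c^2 := by positivity
          have hcn2 : (0:ℝ) ≤ c^2/2 := by positivity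
          have := mul_le_mul_of_nonneg_left h1 hcn
          have := mul_le_mul_of_nonneg_left h2 hcn2
          linarith
      _ ≤ c^2 * Real.log n + 2 * c^2 := by
          have : (0:ℝ) ≤ 1/n := by positivity
          nlinarith
  refine ⟨2, by norm_num, ?_⟩
  filter_upwards [eventually_ge_atTop 8] with n hn8
  have hn : 1 ≤ n := by omega
  have hn0 : (0:ℝ) < n := by exact_mod_cast hn
  have hL2 : (2:ℝ) ≤ Real.log n := by
    rw [← Real.log_exp 2]
    apply Real.log_le_log (Real.exp_pos 2)
    have he : Real.exp 1 ≤ 2.7182818286 := Real.exp_one_lt_d9.le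
    have h1 : Real.exp 2 = Real.exp 1 * Real.exp 1 := by
      rw [← Real.exp_add]; norm_num
    have h8 : (8:ℝ) ≤ (n:ℝ) := by exact_mod_cast hn8
    nlinarith [Real.exp_pos 1]
  have hL0 : (0:ℝ) < Real.log n := by linarith
  set L := Real.log n with hLdef
  have hLn : L ≤ (n:ℝ) := by
    have := Real.log_le_sub_one_of_pos hn0
    linarith
  set S := ∑ k ∈ Finset.Icc 1 n, (a k)^2 with hS
  have hSpos : 0 < S := hsum_pos n hn
  have hSl : c^2 * L ≤ S := hs_lb n hn
  have hSu : S ≤ c^2 * L + 2 * c^2 := hs_ub n hn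
  have hsn : s n = Real.sqrt S := hs n
  obtain ⟨hal, hau⟩ := ha2 n hn
  have han_pos : 0 < a n := by
    rw [ha' n hn]
    have h1 := Real.Gamma_pos_of_pos hn0
    have h2 := Real.Gamma_pos_of_pos (show (0:ℝ) < (n:ℝ) + 1/2 by linarith)
    positivity
  set r : ℝ := (a n)^2 * ((n:ℝ) * L) / S with hr
  have hr_nonneg : 0 ≤ r := by positivity
  have key : a n / s n * Real.sqrt ((n:ℝ) * L) = Real.sqrt r := by
    rw [hr, hsn, Real.sqrt_div (by positivity), Real.sqrt_mul (sq_nonneg _),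
      Real.sqrt_sq han_pos.le]
    ring
  rw [key]
  clear_value L S r
  -- bounds on r
  have hr_up : r ≤ 1 + 1/L := by
    have hX : (a n)^2 * ((n:ℝ) * L) ≤ c^2 * L * (1 + 1/(2*(n:ℝ))) := by
      have h1 : (a n)^2 * (n:ℝ) ≤ c^2 * (1 + 1/(2*(n:ℝ))) := by
        have := mul_le_mul_of_nonneg_right hau hn0.le
        calc (a n)^2 * (n:ℝ) ≤ c^2 * (1/(n:ℝ) + 1/(2*(n:ℝ)^2)) * n := this
          _ = c^2 * (1 + 1/(2*(n:ℝ))) := by field_simp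
      calc (a n)^2 * ((n:ℝ) * L) = ((a n)^2 * (n:ℝ)) * L := by ring
        _ ≤ c^2 * (1 + 1/(2*(n:ℝ))) * L := mul_le_mul_of_nonneg_right h1 hL0.le
        _ = c^2 * L * (1 + 1/(2*(n:ℝ))) := by ring
    have h2 : r ≤ c^2 * L * (1 + 1/(2*(n:ℝ))) / (c^2 * L) := by
      rw [hr]
      exact div_le_div₀ (by positivity) hX (by positivity) hSl
    have h3 : c^2 * L * (1 + 1/(2*(n:ℝ))) / (c^2 * L) = 1 + 1/(2*(n:ℝ)) := by
      field_simp
    rw [h3] at h2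
    have h4 : 1/(2*(n:ℝ)) ≤ 1/L := by
      apply div_le_div_of_nonneg_left (by norm_num) hL0
      linarith
    linarith
  have hr_low : 1 - 2/L ≤ r := by
    have hX : c^2 * L ≤ (a n)^2 * ((n:ℝ) * L) := by
      have h1 : c^2 ≤ (a n)^2 * (n:ℝ) := by
        have := mul_le_mul_of_nonneg_right hal hn0.le
        calc c^2 = c^2/(n:ℝ) * n := by field_simp
          _ ≤ (a n)^2 * (n:ℝ) := this
      calc c^2 * L ≤ ((a n)^2 * (n:ℝ)) * L := mul_le_mul_of_nonneg_right h1 hL0.le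
        _ = (a n)^2 * ((n:ℝ) * L) := by ring
    have h2 : c^2 * L / (c^2 * L + 2 * c^2) ≤ r := by
      rw [hr]
      exact div_le_div₀ (by positivity) hX hSpos hSu
    have h3 : 1 - 2/L ≤ c^2 * L / (c^2 * L + 2 * c^2) := by
      rw [le_div_iff₀ (by positivity)]
      have : (1 - 2/L) * (c^2 * L + 2*c^2) = c^2 * L - 4 * c^2 / L := by
        field_simp; ring
      rw [this]
      have : 0 ≤ 4 * c^2 / L := by positivity
      linarith
    linarith
  -- sqrt bounds
  have hup : Real.sqrt r ≤ 1 + 2/L := by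
    rw [Real.sqrt_le_left (by positivity)]
    have h1 : (1 + 2/L)^2 = 1 + 4/L + 4/L^2 := by field_simp; ring
    have h2 : (0:ℝ) ≤ 4/L^2 := by positivity
    have h3 : 1/L ≤ 4/L := by
      rw [div_le_div_iff₀ hL0 hL0]; nlinarith
    rw [h1]; linarith
  have hlow : 1 - 2/L ≤ Real.sqrt r := by
    apply Real.le_sqrt_of_sq_le
    have h1 : (1 - 2/L)^2 = 1 - 4/L + 4/L^2 := by field_simp; ring
    -- need 4/L² ≤ 2/L, i.e. L ≥ 2
    have h2 : 4/L^2 ≤ 2/L := by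
      rw [div_le_div_iff₀ (by positivity) hL0]
      nlinarith [mul_nonneg hL0.le (show (0:ℝ) ≤ L - 2 by linarith)]
    have h4 : (4:ℝ)/L = 2*(2/L) := by ring
    rw [h1]; linarith
  rw [abs_le]
  constructor <;> linarith
end

section
/- Let p ∈ [0,1), ǎ_n = Γ(n)Γ(1−p)/Γ(n−p) (with ǎ_1 = 1), and š_n² = Σ_{k=1}^n ǎ_k². Then ǎ_n/š_n = √(1+2p)·n^{−1/2}·(1 + O(n^{−1})) as n → ∞. -/
open Filter Real

set_option maxHeartbeats 1600000 in
/-- For `p ∈ [0,1)`, `ǎ_n/š_n = √(1+2p) n^{-1/2} (1 + O(n⁻¹))`. -/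
theorem stmt8 (p : ℝ) (hp0 : 0 ≤ p) (hp1 : p < 1) (a : ℕ → ℝ) (s : ℕ → ℝ)
    (ha1 : a 1 = 1)
    (ha : ∀ n : ℕ, 2 ≤ n → a n = Real.Gamma n * Real.Gamma (1 - p) / Real.Gamma (n - p))
    (hs : ∀ n : ℕ, s n = Real.sqrt (∑ k ∈ Finset.Icc 1 n, (a k) ^ 2)) :
    ∃ C : ℝ, 0 < C ∧ ∀ᶠ n : ℕ in atTop,
      |a n / s n / (Real.sqrt (1 + 2 * p) * (n : ℝ) ^ (-(1:ℝ)/2)) - 1| ≤ C / n := by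
  have h2p : (0:ℝ) < 1 + 2*p := by linarith
  -- positivity of a n for n ≥ 1
  have hapos : ∀ n : ℕ, 1 ≤ n → 0 < a n := by
    intro n hn
    rcases eq_or_lt_of_le hn with h | h
    · rw [← h, ha1]; norm_num
    · rw [ha n h]
      have hn2 : (2:ℝ) ≤ (n:ℝ) := by exact_mod_cast h
      exact div_pos (mul_pos (Real.Gamma_pos_of_pos (by linarith))
        (Real.Gamma_pos_of_pos (by linarith))) (Real.Gamma_pos_of_pos (by linarith))
  -- recursion
  have hrec : ∀ n : ℕ, 1 ≤ n → a (n+1) * ((n:ℝ) - p) = a n * (n:ℝ) := by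
    intro n hn
    rcases eq_or_lt_of_le hn with h | h
    · have hn1 : n = 1 := h.symm
      subst hn1
      have hG1 : (0:ℝ) < Real.Gamma (1 - p) := Real.Gamma_pos_of_pos (by linarith)
      have h2 : a 2 = Real.Gamma ((2:ℕ):ℝ) * Real.Gamma (1 - p) / Real.Gamma (((2:ℕ):ℝ) - p) :=
        ha 2 le_rfl
      have hc : ((2:ℕ):ℝ) = 2 := by norm_num
      rw [hc] at h2
      have hG2 : Real.Gamma (2 - p) = (1 - p) * Real.Gamma (1 - p) := by
        rw [show (2:ℝ) - p = (1 - p) + 1 by ring, Real.Gamma_add_one (by linarith)]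
      rw [h2, hG2, Real.Gamma_two, ha1]
      have h1p : (1:ℝ) - p ≠ 0 := by linarith
      have hG1' : Real.Gamma (1 - p) ≠ 0 := ne_of_gt hG1
      push_cast
      field_simp
    · -- n ≥ 2
      have hn2 : 2 ≤ n := h
      have hn2' : (2:ℝ) ≤ (n:ℝ) := by exact_mod_cast h
      have hA := ha n hn2
      have hB := ha (n+1) (by omega)
      have hcast : ((n+1:ℕ):ℝ) = (n:ℝ) + 1 := by push_cast; ring
      rw [hcast] at hB
      have hGn : Real.Gamma ((n:ℝ) + 1) = (n:ℝ) * Real.Gamma (n:ℝ) :=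
        Real.Gamma_add_one (by positivity)
      have hGnp : Real.Gamma ((n:ℝ) + 1 - p) = ((n:ℝ) - p) * Real.Gamma ((n:ℝ) - p) := by
        rw [show (n:ℝ) + 1 - p = ((n:ℝ) - p) + 1 by ring,
          Real.Gamma_add_one (by linarith)]
      have hGnp_pos : (0:ℝ) < Real.Gamma ((n:ℝ) - p) := Real.Gamma_pos_of_pos (by linarith)
      have hnp : ((n:ℝ) - p) ≠ 0 := by linarith
      have hGnp_ne : Real.Gamma ((n:ℝ) - p) ≠ 0 := ne_of_gt hGnp_pos
      rw [hB, hA, hGn, hGnp]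
      field_simp
  -- main bounds
  have hbound : ∀ n : ℕ, 1 ≤ n →
      (n:ℝ) * (a n)^2 ≤ (1 + 2*p) * (∑ k ∈ Finset.Icc 1 n, (a k)^2) ∧
      (1 + 2*p) * (∑ k ∈ Finset.Icc 1 n, (a k)^2) ≤ ((n:ℝ) + 1 + 2*p) * (a n)^2 := by
    intro n hn
    induction n, hn using Nat.le_induction with
    | base =>
      simp only [Finset.Icc_self, Finset.sum_singleton, ha1, Nat.cast_one]
      constructor <;> nlinarith
    | succ n hn ih =>
      have hsum : ∑ k ∈ Finset.Icc 1 (n+1), (a k)^2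
          = (∑ k ∈ Finset.Icc 1 n, (a k)^2) + (a (n+1))^2 :=
        Finset.sum_Icc_succ_top (by omega) _
      have hq1 : (1:ℝ) ≤ (n:ℝ) := by exact_mod_cast hn
      have hqp : (0:ℝ) < (n:ℝ) - p := by linarith
      have hA : 0 < a n := hapos n hn
      have hB : 0 < a (n+1) := hapos (n+1) (by omega)
      have hk := hrec n hn
      have hk2 : (a (n+1))^2 * ((n:ℝ) - p)^2 = (a n)^2 * (n:ℝ)^2 := by
        have h0 : (a (n+1) * ((n:ℝ) - p))^2 = (a n * (n:ℝ))^2 := by rw [hk]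
        nlinarith [h0]
      -- key1 : (q+1) B² ≤ q A² + (1+2p) B²
      have key1 : ((n:ℝ) + 1) * (a (n+1))^2 ≤ (n:ℝ) * (a n)^2 + (1 + 2*p) * (a (n+1))^2 := by
        have h1 : ((n:ℝ) + 1) * (a (n+1))^2 * ((n:ℝ) - p)^2
            ≤ ((n:ℝ) * (a n)^2 + (1 + 2*p) * (a (n+1))^2) * ((n:ℝ) - p)^2 := by
          nlinarith [hk2, sq_nonneg (a n), sq_nonneg (a n * p),
            mul_nonneg (mul_nonneg (sq_nonneg (a n)) (by linarith : (0:ℝ) ≤ (n:ℝ))) (sq_nonneg p)]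
        exact le_of_mul_le_mul_right h1 (by positivity)
      -- key2 : (q+1+2p) A² ≤ (q+1) B²
      have key2 : ((n:ℝ) + 1 + 2*p) * (a n)^2 ≤ ((n:ℝ) + 1) * (a (n+1))^2 := by
        have h1 : ((n:ℝ) + 1 + 2*p) * (a n)^2 * ((n:ℝ) - p)^2
            ≤ ((n:ℝ) + 1) * (a (n+1))^2 * ((n:ℝ) - p)^2 := by
          nlinarith [hk2, sq_nonneg (a n),
            mul_nonneg (mul_nonneg (sq_nonneg (a n)) (mul_nonneg hp0 hp0))
              (by linarith : (0:ℝ) ≤ (n:ℝ) - 1),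
            mul_nonneg (mul_nonneg (sq_nonneg (a n)) hp0) (by linarith : (0:ℝ) ≤ (n:ℝ) - 1),
            mul_nonneg (mul_nonneg (sq_nonneg (a n)) (mul_nonneg hp0 hp0))
              (by linarith : (0:ℝ) ≤ 1 - p)]
        exact le_of_mul_le_mul_right h1 (by positivity)
      obtain ⟨ih1, ih2⟩ := ih
      rw [hsum]
      push_cast
      constructor
      · linarith
      · linarith
  -- conclusion
  refine ⟨3, by norm_num, ?_⟩
  filter_upwards [eventually_ge_atTop 1] with n hn
  obtain ⟨hb1, hb2⟩ := hbound n hn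
  set T := ∑ k ∈ Finset.Icc 1 n, (a k)^2 with hT
  have hA : 0 < a n := hapos n hn
  have hq1 : (1:ℝ) ≤ (n:ℝ) := by exact_mod_cast hn
  have hn0 : (0:ℝ) < (n:ℝ) := by linarith
  have hApos2 : 0 < (a n)^2 := by positivity
  have hTpos : 0 < T := by nlinarith
  have hspos : 0 < s n := by rw [hs n]; exact Real.sqrt_pos.mpr hTpos
  have hrpow : ((n:ℝ)) ^ (-(1:ℝ)/2) = (Real.sqrt (n:ℝ))⁻¹ := by
    rw [show (-(1:ℝ)/2) = -(1/2) by ring, Real.rpow_neg (by linarith),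
      ← Real.sqrt_eq_rpow]
  have hsq2p : 0 < Real.sqrt (1 + 2*p) := Real.sqrt_pos.mpr h2p
  have hsqn : 0 < Real.sqrt (n:ℝ) := Real.sqrt_pos.mpr hn0
  set x := (a n)^2 * (n:ℝ) / ((1 + 2*p) * T) with hx
  have hxpos : 0 < x := by positivity
  have hx1 : x ≤ 1 := by
    rw [hx, div_le_one (by positivity)]
    linarith
  have hxlo : (n:ℝ) ≤ x * ((n:ℝ) + 1 + 2*p) := by
    rw [hx, div_mul_eq_mul_div, le_div_iff₀ (by positivity)]
    nlinarith [hb2]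
  have hR : a n / s n / (Real.sqrt (1 + 2*p) * (n:ℝ) ^ (-(1:ℝ)/2)) = Real.sqrt x := by
    have hxval : Real.sqrt x = a n * Real.sqrt (n:ℝ) / (Real.sqrt (1 + 2*p) * Real.sqrt T) := by
      rw [hx, Real.sqrt_div (by positivity), Real.sqrt_mul (sq_nonneg _),
        Real.sqrt_sq hA.le, Real.sqrt_mul h2p.le]
    have hsT : 0 < Real.sqrt T := Real.sqrt_pos.mpr hTpos
    rw [hxval, hrpow, hs n, ← hT]
    rw [div_div, div_eq_div_iff (ne_of_gt (by positivity)) (ne_of_gt (by positivity))]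
    field_simp
  rw [hR]
  have hsx1 : Real.sqrt x ≤ 1 := Real.sqrt_le_one.mpr hx1
  have hsxnn : 0 ≤ Real.sqrt x := Real.sqrt_nonneg x
  have hsxx : x ≤ Real.sqrt x := by nlinarith [Real.sq_sqrt hxpos.le]
  rw [abs_of_nonpos (by linarith), le_div_iff₀ hn0]
  nlinarith [hxlo, hx1, hsxx, hp0, hp1, hq1]
end

section
/- Let p ∈ [0,1/2), â_n = Γ(n)Γ(1+p)/Γ(n+p), ŝ_n² = Σ_{k=1}^n â_k². Then the sequence (1−2p)ŝ_n² − n·â_n² is bounded; more precisely (1−2p)ŝ_n² − n·â_n² = −2p + Σ_{k=2}^n p²(k−1)/(k−1+p)² · â_{k−1}², which is O(1) as n → ∞. -/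
open Filter Real

/-- For `p ∈ [0,1/2)`, the sequence `(1-2p)ŝ_n² - n â_n²` equals
`-2p + Σ_{k=2}^n p²(k-1)/(k-1+p)² â_{k-1}²` and is bounded. -/
theorem stmt9 (p : ℝ) (hp0 : 0 ≤ p) (hp1 : p < 1 / 2) (a : ℕ → ℝ) (s2 : ℕ → ℝ)
    (ha1 : a 1 = 1)
    (ha : ∀ n : ℕ, 2 ≤ n → a n = Real.Gamma n * Real.Gamma (1 + p) / Real.Gamma (n + p))
    (hs : ∀ n : ℕ, s2 n = ∑ k ∈ Finset.Icc 1 n, (a k) ^ 2) :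
    (∀ n : ℕ, 1 ≤ n →
      (1 - 2 * p) * s2 n - n * (a n) ^ 2
        = -2 * p + ∑ k ∈ Finset.Icc 2 n,
            p ^ 2 * ((k : ℝ) - 1) / ((k : ℝ) - 1 + p) ^ 2 * (a (k - 1)) ^ 2) ∧
    (∃ C : ℝ, 0 < C ∧ ∀ n : ℕ, |(1 - 2 * p) * s2 n - n * (a n) ^ 2| ≤ C) := by
  have hp2 : (0:ℝ) < 1 + p := by linarith
  -- recurrence
  have hrec : ∀ n : ℕ, 1 ≤ n → a (n + 1) = a n * n / ((n : ℝ) + p) := by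
    intro n hn
    rcases eq_or_lt_of_le hn with h | h
    · -- n = 1
      have h1 : n = 1 := h.symm
      subst h1
      have hG : Real.Gamma (1 + p) ≠ 0 := (Real.Gamma_pos_of_pos hp2).ne'
      have h2 : Real.Gamma ((2:ℕ) + p) = (1 + p) * Real.Gamma (1 + p) := by
        have := Real.Gamma_add_one hp2.ne'
        push_cast
        rw [show (2:ℝ) + p = 1 + p + 1 by ring, this]
      rw [ha 2 le_rfl, h2, ha1]
      push_cast
      rw [Real.Gamma_two]
      field_simp
    · -- n ≥ 2
      have h2 : 2 ≤ n := h
      have hn0 : (0:ℝ) < (n : ℝ) := by positivity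
      have hnp : (0:ℝ) < (n : ℝ) + p := by linarith
      have hGnp : Real.Gamma ((n : ℝ) + p) ≠ 0 := (Real.Gamma_pos_of_pos hnp).ne'
      have hGn1 : Real.Gamma (((n+1 : ℕ) : ℝ)) = (n : ℝ) * Real.Gamma n := by
        push_cast
        exact Real.Gamma_add_one hn0.ne'
      have hGnp1 : Real.Gamma (((n+1 : ℕ) : ℝ) + p) = ((n : ℝ) + p) * Real.Gamma ((n:ℝ) + p) := by
        push_cast
        rw [show (n:ℝ) + 1 + p = ((n:ℝ) + p) + 1 by ring]
        exact Real.Gamma_add_one hnp.ne'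
      rw [ha (n+1) (by omega), ha n h2, hGn1, hGnp1]
      field_simp
  -- positivity
  have hpos : ∀ n : ℕ, 1 ≤ n → 0 < a n := by
    intro n hn
    induction n with
    | zero => omega
    | succ m ih =>
      rcases Nat.eq_or_lt_of_le hn with h | h
      · rw [show m + 1 = 1 by omega, ha1]; norm_num
      · have hm1 : 1 ≤ m := by omega
        have hm0 : (0:ℝ) < (m : ℝ) := by exact_mod_cast Nat.pos_of_ne_zero (by omega)
        have := ih hm1
        rw [hrec m hm1]
        positivity
  -- the identity
  have key : ∀ n : ℕ, 1 ≤ n →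
      (1 - 2 * p) * s2 n - n * (a n) ^ 2
        = -2 * p + ∑ k ∈ Finset.Icc 2 n,
            p ^ 2 * ((k : ℝ) - 1) / ((k : ℝ) - 1 + p) ^ 2 * (a (k - 1)) ^ 2 := by
    intro n hn
    induction n, hn using Nat.le_induction with
    | base =>
      rw [hs 1]
      simp [ha1]
    | succ n hn ih =>
      have hsum : s2 (n+1) = s2 n + (a (n+1))^2 := by
        rw [hs (n+1), hs n, Finset.sum_Icc_succ_top (by omega)]
      have hS : ∑ k ∈ Finset.Icc 2 (n+1),
            p ^ 2 * ((k : ℝ) - 1) / ((k : ℝ) - 1 + p) ^ 2 * (a (k - 1)) ^ 2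
          = (∑ k ∈ Finset.Icc 2 n,
            p ^ 2 * ((k : ℝ) - 1) / ((k : ℝ) - 1 + p) ^ 2 * (a (k - 1)) ^ 2)
            + p ^ 2 * (n : ℝ) / ((n : ℝ) + p) ^ 2 * (a n) ^ 2 := by
        rw [Finset.sum_Icc_succ_top (by omega)]
        push_cast
        norm_num
      have hnp : (0:ℝ) < (n : ℝ) + p := by
        have : (0:ℝ) < (n:ℝ) := by exact_mod_cast Nat.pos_of_ne_zero (by omega)
        linarith
      rw [hsum, hS, hrec n hn]
      push_cast
      have expand : (1 - 2 * p) * (s2 n + (a n * n / ((n:ℝ) + p)) ^ 2)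
          - ((n:ℝ) + 1) * (a n * n / ((n:ℝ) + p)) ^ 2
          = ((1 - 2 * p) * s2 n - n * (a n) ^ 2)
            + p ^ 2 * (n : ℝ) / ((n : ℝ) + p) ^ 2 * (a n) ^ 2 := by
        field_simp
        ring
      rw [expand, ih]
      ring
  refine ⟨key, 2, by norm_num, ?_⟩
  intro n
  rcases Nat.eq_zero_or_pos n with h | h
  · rw [h, hs 0]
    simp
  · rw [key n h]
    -- bound the sum
    have hterm_nonneg : ∀ k ∈ Finset.Icc 2 n,
        0 ≤ p ^ 2 * ((k : ℝ) - 1) / ((k : ℝ) - 1 + p) ^ 2 * (a (k - 1)) ^ 2 := by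
      intro k hk
      simp only [Finset.mem_Icc] at hk
      have h1 : (1:ℝ) ≤ (k:ℝ) := by exact_mod_cast le_trans (by norm_num) hk.1
      have : (0:ℝ) ≤ (k:ℝ) - 1 := by linarith
      positivity
    have hSnonneg : 0 ≤ ∑ k ∈ Finset.Icc 2 n,
        p ^ 2 * ((k : ℝ) - 1) / ((k : ℝ) - 1 + p) ^ 2 * (a (k - 1)) ^ 2 :=
      Finset.sum_nonneg hterm_nonneg
    have hSle : ∀ m : ℕ, 1 ≤ m → (∑ k ∈ Finset.Icc 2 m,
        p ^ 2 * ((k : ℝ) - 1) / ((k : ℝ) - 1 + p) ^ 2 * (a (k - 1)) ^ 2)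
        ≤ p / 2 * (1 - (a m) ^ 2) := by
      intro m hm
      induction m, hm using Nat.le_induction with
      | base => simp [ha1]
      | succ m hm ih =>
        rw [Finset.sum_Icc_succ_top (by omega)]
        have hm0 : (0:ℝ) < (m : ℝ) := by exact_mod_cast Nat.pos_of_ne_zero (by omega)
        have hmp : (0:ℝ) < (m : ℝ) + p := by linarith
        have hterm : p ^ 2 * (((m+1:ℕ) : ℝ) - 1) / (((m+1:ℕ) : ℝ) - 1 + p) ^ 2 * (a ((m+1) - 1)) ^ 2
            ≤ p / 2 * ((a m)^2 - (a (m+1))^2) := by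
          have hred : (m + 1) - 1 = m := rfl
        -- rewrite a (m+1) via recurrence
          rw [hred, hrec m hm]
          push_cast
          have heq : p / 2 * ((a m)^2 - (a m * (m:ℝ) / ((m:ℝ) + p))^2)
              = p ^ 2 * ((m:ℝ)) / ((m:ℝ) + p) ^ 2 * (a m) ^ 2
                + (a m)^2 * p^3 / (2 * ((m:ℝ) + p)^2) := by
            field_simp
            ring
          have h1 : ((m:ℝ) + 1) - 1 = (m:ℝ) := by ring
          rw [h1, heq]
          have : 0 ≤ (a m)^2 * p^3 / (2 * ((m:ℝ) + p)^2) := by positivity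
          linarith
        have := ih
        nlinarith [hterm, this]
    have := hSle n h
    have ha2 : 0 ≤ (a n)^2 := sq_nonneg _
    rw [abs_le]
    constructor <;> nlinarith
end

section
/- Assume that for every f ∈ C_e(ℝ) and every fixed A > 0, almost surely (1/log b_n) ∫_A^{b_n} (1/t) f(W(t)/√t) dt → E f(Z), and that (b_n) is increasing with b_n → ∞ and b_{n−1}/b_n → 1. Then for every f ∈ C_e(ℝ), almost surely T_n(f,W) := (1/log b_n) Σ_{k=2}^n ∫_{b_{k−1}}^{b_k} (1/b_k) f(W(t)/√t) dt → E f(Z). -/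
open MeasureTheory ProbabilityTheory Filter Real Set

/-- A standard one-dimensional Brownian motion on `[0, ∞)` (extended to `ℝ` by
ignoring negative times): a.s. starts at `0`, a.s. has continuous paths,
has Gaussian increments `W t - W s ~ N(0, t - s)` for `0 ≤ s ≤ t`, and has
independent increments over disjoint ordered time intervals. -/
structure IsStandardBM {Ω : Type} [MeasurableSpace Ω] (P : Measure Ω) (W : ℝ → Ω → ℝ) : Prop where
  meas : ∀ t, Measurable (W t)
  init : ∀ᵐ ω ∂P, W 0 ω = 0
  cont : ∀ᵐ ω ∂P, Continuous fun t => W t ω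
  gauss : ∀ s t : ℝ, 0 ≤ s → s ≤ t →
    P.map (fun ω => W t ω - W s ω) = gaussianReal 0 ((t - s).toNNReal)
  indep : ∀ (n : ℕ) (t : ℕ → ℝ), Monotone t → 0 ≤ t 0 →
    iIndepFun
      (fun i : Fin n => fun ω => W (t (i.1 + 1)) ω - W (t i.1) ω) P

/-- Telescoping of interval integrals along the sequence `b`. -/
lemma tele_aux (b : ℕ → ℝ) (F : ℝ → ℝ)
    (hInt : ∀ j k : ℕ, IntervalIntegrable F MeasureTheory.volume (b j) (b k)) :
    ∀ m n : ℕ, m ≤ n →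
      ∑ k ∈ Finset.Ioc m n, (∫ t in (b (k - 1))..(b k), F t) = ∫ t in (b m)..(b n), F t := by
  intro m n h
  induction n, h using Nat.le_induction with
  | base => simp
  | succ n hmn ih =>
    rw [Finset.sum_Ioc_succ_top hmn, ih]
    simp only [Nat.add_sub_cancel]
    exact intervalIntegral.integral_add_adjacent_intervals (hInt m n) (hInt n (n + 1))

/-- From the a.s. logarithmic-average convergence of
`(log b_n)⁻¹ ∫_A^{b_n} t⁻¹ f(W(t)/√t) dt` for every `f ∈ C_e(ℝ)` and `A > 0`,
together with `b_{n-1}/b_n → 1`, deduce the a.s. convergence of the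
Riemann-sum average `T_n(f, W)`. -/
theorem stmt12 {Ω : Type} [MeasurableSpace Ω] (P : Measure Ω) [IsProbabilityMeasure P]
    (W : ℝ → Ω → ℝ) (hW : IsStandardBM P W)
    (b : ℕ → ℝ) (hbpos : ∀ n, 0 < b n) (hmono : StrictMono b)
    (hinf : Tendsto b atTop atTop)
    (hratio : Tendsto (fun n => b n / b (n + 1)) atTop (nhds (1:ℝ)))
    (H : ∀ f : ℝ → ℝ, Continuous f →
      (∃ γ : ℝ, γ < 1 / 2 ∧ ∀ x, |f x| ≤ Real.exp (γ * x ^ 2)) →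
      ∀ A : ℝ, 0 < A →
      ∀ᵐ ω ∂P, Tendsto (fun n =>
          (Real.log (b n))⁻¹ * ∫ t in A..(b n), (1 / t) * f (W t ω / Real.sqrt t))
        atTop (nhds (∫ x, f x ∂(gaussianReal 0 1)))) :
    ∀ f : ℝ → ℝ, Continuous f →
      (∃ γ : ℝ, γ < 1 / 2 ∧ ∀ x, |f x| ≤ Real.exp (γ * x ^ 2)) →
      ∀ᵐ ω ∂P, Tendsto (fun n =>
          (Real.log (b n))⁻¹ * ∑ k ∈ Finset.Icc 2 n,
            ∫ t in (b (k - 1))..(b k), (1 / b k) * f (W t ω / Real.sqrt t))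
        atTop (nhds (∫ x, f x ∂(gaussianReal 0 1))) := by
  intro f hf hfb
  obtain ⟨γ, hγ, hb⟩ := hfb
  -- the a.s. hypotheses we shall use
  have hH1 := H f hf ⟨γ, hγ, hb⟩ (b 1) (hbpos 1)
  have hH2 : ∀ᵐ ω ∂P, ∀ N : ℕ, Tendsto (fun n =>
      (Real.log (b n))⁻¹ * ∫ t in (b N)..(b n), (1 / t) * |f (W t ω / Real.sqrt t)|)
      atTop (nhds (∫ x, |f x| ∂(gaussianReal 0 1))) := by
    rw [ae_all_iff]
    intro N
    exact H (fun x => |f x|) hf.abs ⟨γ, hγ, fun x => by rw [abs_abs]; exact hb x⟩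
      (b N) (hbpos N)
  -- deterministic preliminaries
  have hD : Tendsto (fun k : ℕ => (b k - b (k - 1)) / b k) atTop (nhds 0) := by
    rw [← tendsto_add_atTop_iff_nat 1]
    have e : (fun k : ℕ => (b (k + 1) - b ((k + 1) - 1)) / b (k + 1))
        = fun k => 1 - b k / b (k + 1) := by
      funext k
      rw [Nat.add_sub_cancel, sub_div, div_self (hbpos (k + 1)).ne']
    rw [e]
    have h0 : Tendsto (fun _ : ℕ => (1:ℝ)) atTop (nhds 1) := tendsto_const_nhds
    simpa using h0.sub hratio
  have hloginv : Tendsto (fun n => (Real.log (b n))⁻¹) atTop (nhds 0) :=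
    (Real.tendsto_log_atTop.comp hinf).inv_tendsto_atTop
  have hlogpos : ∀ᶠ n in atTop, 0 < Real.log (b n) :=
    (hinf.eventually (eventually_gt_atTop 1)).mono fun n hn => Real.log_pos hn
  filter_upwards [hW.cont, hH1, hH2] with ω hcont h1 h2
  set g : ℝ → ℝ := fun t => f (W t ω / Real.sqrt t) with hg
  -- continuity facts
  have hgc : ContinuousOn g (Ioi 0) := by
    apply hf.comp_continuousOn
    exact ContinuousOn.div hcont.continuousOn Real.continuous_sqrt.continuousOn
      (fun t ht => Real.sqrt_ne_zero'.mpr ht)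
  have hsub : ∀ j k : ℕ, Set.uIcc (b j) (b k) ⊆ Ioi 0 := by
    intro j k t ht
    exact lt_of_lt_of_le (lt_min (hbpos j) (hbpos k)) ht.1
  have hinvc : ContinuousOn (fun t : ℝ => 1 / t) (Ioi 0) :=
    continuousOn_const.div continuousOn_id (fun t ht => ne_of_gt ht)
  have hInt1 : ∀ j k : ℕ, IntervalIntegrable (fun t => (1 / t) * g t)
      MeasureTheory.volume (b j) (b k) := fun j k =>
    ((hinvc.mul hgc).mono (hsub j k)).intervalIntegrable
  have hInt2 : ∀ j k : ℕ, IntervalIntegrable (fun t => (1 / t) * |g t|)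
      MeasureTheory.volume (b j) (b k) := fun j k =>
    ((hinvc.mul hgc.abs).mono (hsub j k)).intervalIntegrable
  -- the key per-interval estimate
  have hk : ∀ k : ℕ, 1 ≤ k →
      |(∫ t in (b (k - 1))..(b k), (1 / b k) * g t) -
          ∫ t in (b (k - 1))..(b k), (1 / t) * g t|
        ≤ ((b k - b (k - 1)) / b k) * ∫ t in (b (k - 1))..(b k), (1 / t) * |g t| := by
    intro k hk1
    have ha : 0 < b (k - 1) := hbpos _
    have hc : 0 < b k := hbpos _
    have hac : b (k - 1) ≤ b k := hmono.monotone (Nat.sub_le k 1)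
    have hIcont : ContinuousOn (fun t => (1 / b k - 1 / t) * g t) (Ioi 0) :=
      (continuousOn_const.sub hinvc).mul hgc
    have hI3 : IntervalIntegrable (fun t => (1 / b k - 1 / t) * g t)
        MeasureTheory.volume (b (k - 1)) (b k) :=
      (hIcont.mono (hsub (k - 1) k)).intervalIntegrable
    have hIc : IntervalIntegrable (fun t => (1 / b k) * g t)
        MeasureTheory.volume (b (k - 1)) (b k) :=
      ((continuousOn_const.mul hgc).mono (hsub (k - 1) k)).intervalIntegrable
    have e1 : (∫ t in (b (k - 1))..(b k), (1 / b k) * g t) -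
        ∫ t in (b (k - 1))..(b k), (1 / t) * g t
        = ∫ t in (b (k - 1))..(b k), (1 / b k - 1 / t) * g t := by
      rw [← intervalIntegral.integral_sub hIc (hInt1 (k - 1) k)]
      congr 1
      funext t
      ring
    rw [e1]
    have hbound_int : IntervalIntegrable
        (fun t => ((b k - b (k - 1)) / b k) * ((1 / t) * |g t|))
        MeasureTheory.volume (b (k - 1)) (b k) := (hInt2 (k - 1) k).const_mul _
    calc |∫ t in (b (k - 1))..(b k), (1 / b k - 1 / t) * g t|
        ≤ ∫ t in (b (k - 1))..(b k), |(1 / b k - 1 / t) * g t| :=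
          intervalIntegral.abs_integral_le_integral_abs hac
      _ ≤ ∫ t in (b (k - 1))..(b k), ((b k - b (k - 1)) / b k) * ((1 / t) * |g t|) := by
          apply intervalIntegral.integral_mono_on hac hI3.abs hbound_int
          intro t ht
          have ht0 : 0 < t := lt_of_lt_of_le ha ht.1
          have h1c : (1 : ℝ) / b k ≤ 1 / t := one_div_le_one_div_of_le ht0 ht.2
          have habs : |1 / b k - 1 / t| ≤ (b k - b (k - 1)) / b k * (1 / t) := by
            rw [abs_sub_comm, abs_of_nonneg (sub_nonneg.mpr h1c)]
            have e2 : 1 / t - 1 / b k = (b k - t) / (t * b k) := by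
              field_simp
            have e3 : (b k - b (k - 1)) / b k * (1 / t) = (b k - b (k - 1)) / (t * b k) := by
              rw [div_mul_div_comm, mul_one, mul_comm]
            rw [e2, e3, div_le_div_iff₀ (mul_pos ht0 hc) (mul_pos ht0 hc)]
            have : b k - t ≤ b k - b (k - 1) := by linarith [ht.1]
            nlinarith [mul_pos ht0 hc]
          calc |(1 / b k - 1 / t) * g t| = |1 / b k - 1 / t| * |g t| := abs_mul _ _
            _ ≤ ((b k - b (k - 1)) / b k * (1 / t)) * |g t| :=
                mul_le_mul_of_nonneg_right habs (abs_nonneg _)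
            _ = (b k - b (k - 1)) / b k * ((1 / t) * |g t|) := by ring
      _ = ((b k - b (k - 1)) / b k) * ∫ t in (b (k - 1))..(b k), (1 / t) * |g t| :=
          intervalIntegral.integral_const_mul _ _
  -- nonnegativity of the absolute-value pieces
  have hJ : ∀ k : ℕ, 0 ≤ ∫ t in (b (k - 1))..(b k), (1 / t) * |g t| := by
    intro k
    apply intervalIntegral.integral_nonneg (hmono.monotone (Nat.sub_le k 1))
    intro t ht
    have ht0 : 0 < t := lt_of_lt_of_le (hbpos (k - 1)) ht.1
    exact mul_nonneg (by positivity) (abs_nonneg _)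
  -- main decomposition
  have hIcc : ∀ n : ℕ, Finset.Icc 2 n = Finset.Ioc 1 n := fun n => Finset.Icc_add_one_left_eq_Ioc 1 n
  simp_rw [hIcc]
  set S : ℕ → ℝ := fun n => ∑ k ∈ Finset.Ioc 1 n,
    ∫ t in (b (k - 1))..(b k), (1 / b k) * g t with hS
  set I : ℕ → ℝ := fun n => ∫ t in (b 1)..(b n), (1 / t) * g t with hI
  have hdecomp : (fun n => (Real.log (b n))⁻¹ * S n)
      = fun n => (Real.log (b n))⁻¹ * (S n - I n) + (Real.log (b n))⁻¹ * I n := by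
    funext n; ring
  show Tendsto (fun n => (Real.log (b n))⁻¹ * S n) atTop _
  rw [hdecomp]
  have hD0 : Tendsto (fun n => (Real.log (b n))⁻¹ * (S n - I n)) atTop (nhds 0) := by
    rw [NormedAddCommGroup.tendsto_nhds_zero]
    intro δ hδ
    set M : ℝ := ∫ x, |f x| ∂(gaussianReal 0 1) with hM
    have hM0 : 0 ≤ M := integral_nonneg fun x => abs_nonneg _
    set ε : ℝ := δ / (2 * (M + 1)) with hε
    have hε0 : 0 < ε := by positivity
    have hεM : ε * M < δ := by
      have : ε * (M + 1) = δ / 2 := by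
        rw [hε]; field_simp
      nlinarith
    obtain ⟨N₀, hN₀⟩ := eventually_atTop.mp
      (hD.eventually (eventually_abs_sub_lt 0 hε0))
    set N : ℕ := max N₀ 1 with hN
    have hN1 : 1 ≤ N := le_max_right _ _
    -- key bound for n ≥ N
    have key : ∀ n : ℕ, N ≤ n → |S n - I n| ≤
        (∑ k ∈ Finset.Ioc 1 N, ((b k - b (k - 1)) / b k) *
          ∫ t in (b (k - 1))..(b k), (1 / t) * |g t|) +
        ε * ∫ t in (b N)..(b n), (1 / t) * |g t| := by
      intro n hn
      have h1n : 1 ≤ n := le_trans hN1 hn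
      have eI : I n = ∑ k ∈ Finset.Ioc 1 n, ∫ t in (b (k - 1))..(b k), (1 / t) * g t :=
        (tele_aux b _ hInt1 1 n h1n).symm
      have step1 : |S n - I n| ≤ ∑ k ∈ Finset.Ioc 1 n,
          ((b k - b (k - 1)) / b k) * ∫ t in (b (k - 1))..(b k), (1 / t) * |g t| := by
        rw [hS, eI, ← Finset.sum_sub_distrib]
        refine le_trans (Finset.abs_sum_le_sum_abs _ _) ?_
        apply Finset.sum_le_sum
        intro k hkmem
        exact hk k (le_of_lt (Finset.mem_Ioc.mp hkmem).1)
      have split : ∑ k ∈ Finset.Ioc 1 n,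
          ((b k - b (k - 1)) / b k) * (∫ t in (b (k - 1))..(b k), (1 / t) * |g t|)
          = (∑ k ∈ Finset.Ioc 1 N, ((b k - b (k - 1)) / b k) *
              ∫ t in (b (k - 1))..(b k), (1 / t) * |g t|) +
            ∑ k ∈ Finset.Ioc N n, ((b k - b (k - 1)) / b k) *
              ∫ t in (b (k - 1))..(b k), (1 / t) * |g t| :=
        (Finset.sum_Ioc_consecutive _ hN1 hn).symm
      have tail : ∑ k ∈ Finset.Ioc N n, ((b k - b (k - 1)) / b k) *
          (∫ t in (b (k - 1))..(b k), (1 / t) * |g t|)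
          ≤ ε * ∫ t in (b N)..(b n), (1 / t) * |g t| := by
        rw [← tele_aux b _ hInt2 N n hn, Finset.mul_sum]
        apply Finset.sum_le_sum
        intro k hkmem
        have hkN : N₀ ≤ k := le_trans (le_max_left _ _)
          (le_of_lt (Finset.mem_Ioc.mp hkmem).1)
        have := hN₀ k hkN
        rw [sub_zero] at this
        exact mul_le_mul_of_nonneg_right (le_of_lt (lt_of_abs_lt this)) (hJ k)
      calc |S n - I n| ≤ _ := step1
        _ = _ := split
        _ ≤ _ := by linarith [tail]
    -- pass to the limit
    set C : ℝ := ∑ k ∈ Finset.Ioc 1 N, ((b k - b (k - 1)) / b k) *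
        ∫ t in (b (k - 1))..(b k), (1 / t) * |g t| with hC
    have hR : Tendsto (fun n => (Real.log (b n))⁻¹ * C +
        ε * ((Real.log (b n))⁻¹ * ∫ t in (b N)..(b n), (1 / t) * |g t|))
        atTop (nhds (0 * C + ε * M)) :=
      (hloginv.mul_const C).add ((h2 N).const_mul ε)
    rw [zero_mul, zero_add] at hR
    have hev := hR.eventually_lt_const hεM
    filter_upwards [eventually_ge_atTop N, hlogpos, hev] with n hn hlg hRn
    have hinv0 : (0:ℝ) ≤ (Real.log (b n))⁻¹ := inv_nonneg.mpr (le_of_lt hlg)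
    calc ‖(Real.log (b n))⁻¹ * (S n - I n)‖
        = (Real.log (b n))⁻¹ * |S n - I n| := by
          rw [Real.norm_eq_abs, abs_mul, abs_of_nonneg hinv0]
      _ ≤ (Real.log (b n))⁻¹ * (C + ε * ∫ t in (b N)..(b n), (1 / t) * |g t|) :=
          mul_le_mul_of_nonneg_left (key n hn) hinv0
      _ = (Real.log (b n))⁻¹ * C +
            ε * ((Real.log (b n))⁻¹ * ∫ t in (b N)..(b n), (1 / t) * |g t|) := by ring
      _ < δ := hRn
  have hfin := hD0.add h1
  rw [zero_add] at hfin
  exact hfin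
end
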